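/- arXiv:1607.00819 — 3 statements merged into one kernel-verified Lean document; each statement's English description precedes it below -/
import Mathlib

section
/- Let (A, R, D) be a strongly consistent EAFC and ADF^EAFC its corresponding ADF. Then: X ⊆ A is a conflict-free extension of (A, R, D) iff it is conflict-free in ADF^EAFC; X is a stable extension of (A, R, D) iff it is a model of ADF^EAFC; X is the grounded extension of (A, R, D) iff it is the acyclic grounded extension of ADF^EAFC; and for σ ∈ {admissible, complete, preferred}, X is a σ-extension of (A, R, D) iff it is a ca₂-σ-extension of ADF^EAFC. -/
open Classical

universe u

namespace Dialectical

variable {α : Type u}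

/-! ### Two-valued (partial) interpretations -/

/-- A partial two-valued interpretation: `some true` = t, `some false` = f, `none` = undefined. -/
abbrev Interp (α : Type u) := α → Option Bool

/-- The domain of an interpretation. -/
def idom (v : Interp α) : Set α := {a | v a ≠ none}

/-- The set of arguments mapped to t. -/
def tset (v : Interp α) : Set α := {a | v a = some true}

/-- The set of arguments mapped to f. -/
def fset (v : Interp α) : Set α := {a | v a = some false}

/-- `w` is a completion of `v` to the set `Z`. -/
def Completion (v w : Interp α) (Z : Set α) : Prop :=
  idom w = Z ∧ ∀ a ∈ idom v, w a = v a

/-- The interpretation assigning t on `T` and f on `F' \ T`. -/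
noncomputable def mkInterp (T F' : Set α) : Interp α :=
  fun a => if a ∈ T then some true else if a ∈ F' then some false else none

/-! ### Abstract dialectical frameworks -/

/-- An abstract dialectical framework: links and acceptance conditions
(`true` = in, `false` = out). -/
structure ADF (α : Type u) where
  L : α → α → Prop
  C : α → Set α → Bool

namespace ADF

variable (D : ADF α)

/-- The parents of an argument. -/
def par (a : α) : Set α := {p | D.L p a}

/-- Evaluating the acceptance condition of `s` under an interpretation. -/
def evalCond (s : α) (w : Interp α) : Bool := D.C s (tset w ∩ D.par s)

/-- `s` is decisively in w.r.t. `v`. -/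
def DecisivelyIn (v : Interp α) (s : α) : Prop :=
  ∀ w : Interp α, Completion v w (idom v ∪ D.par s) → D.evalCond s w = true

/-- `s` is decisively out w.r.t. `v`. -/
def DecisivelyOut (v : Interp α) (s : α) : Prop :=
  ∀ w : Interp α, Completion v w (idom v ∪ D.par s) → D.evalCond s w = false

/-- `v` is a minimal decisively in interpretation for `s` (`v ∈ min_dec(in,s)`). -/
def MinDecIn (v : Interp α) (s : α) : Prop :=
  D.DecisivelyIn v s ∧
  ∀ w : Interp α, D.DecisivelyIn w s → tset w ⊆ tset v → fset w ⊆ fset v →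
    tset w = tset v ∧ fset w = fset v

/-- `pd` is a positive dependency function on `X`. -/
def PDFun (X : Set α) (pd : α → Option (Interp α)) : Prop :=
  ∀ a ∈ X,
    (∀ v, pd a = some v → D.MinDecIn v a ∧ tset v ⊆ X) ∧
    (pd a = none → ¬ ∃ v, D.MinDecIn v a ∧ tset v ⊆ X)

end ADF

/-- The subset of `X` on which `pd` is non-null. -/
def soundDom (X : Set α) (pd : α → Option (Interp α)) : Set α :=
  {a ∈ X | pd a ≠ none}

namespace ADF
variable (D : ADF α)

/-- `pd` is a maximally sound pd-function of `X`. -/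
def MaxSound (X : Set α) (pd : α → Option (Interp α)) : Prop :=
  D.PDFun X pd ∧
  ¬ ∃ (X'' : Set α) (pd' : α → Option (Interp α)),
      D.PDFun X'' pd' ∧ (∀ a ∈ X'', pd' a ≠ none) ∧
      soundDom X pd ⊂ X'' ∧ X'' ⊆ X ∧
      ∀ a ∈ soundDom X pd, pd' a = pd a

end ADF

/-- The t-part of the interpretation assigned by `pd` to `a`. -/
def pdT (pd : α → Option (Interp α)) (a : α) : Set α :=
  {b | ∃ v, pd a = some v ∧ b ∈ tset v}

/-- The f-part of the interpretation assigned by `pd` to `a`. -/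
def pdF (pd : α → Option (Interp α)) (a : α) : Set α :=
  {b | ∃ v, pd a = some v ∧ b ∈ fset v}

/-- `(Fs, G, B)` is a partially acyclic positive dependency evaluation for `x`
based on the pd-function `pd` of `X`. -/
def IsPAEvalWith (pd : α → Option (Interp α)) (X : Set α)
    (x : α) (Fs : Set α) (G : List α) (B : Set α) : Prop :=
  (∀ a ∈ G, a ∉ Fs) ∧ G.Nodup ∧
  x ∈ X ∧ Fs ⊆ X ∧ (∀ a ∈ G, a ∈ X) ∧
  (∀ a ∈ Fs, pd a ≠ none) ∧ (∀ a ∈ G, pd a ≠ none) ∧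
  (G = [] → x ∈ Fs) ∧ (G ≠ [] → G.getLast? = some x) ∧
  (∀ i : ℕ, ∀ h : i < G.length,
      pdT pd (G.get ⟨i, h⟩) ⊆
        Fs ∪ {b | ∃ j : ℕ, ∃ hj : j < G.length, j < i ∧ G.get ⟨j, hj⟩ = b}) ∧
  (∀ a ∈ Fs, pdT pd a ⊆ Fs) ∧
  (∀ a ∈ Fs, ∃ b ∈ Fs, a ∈ pdT pd b) ∧
  B = (⋃ a ∈ Fs, pdF pd a) ∪ ⋃ a ∈ {c | c ∈ G}, pdF pd a

namespace ADF
variable (D : ADF α)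

/-- `(Fs, G, B)` is a partially acyclic positive dependency evaluation for `x` on `X`. -/
def PAEval (X : Set α) (x : α) (Fs : Set α) (G : List α) (B : Set α) : Prop :=
  ∃ pd, D.MaxSound X pd ∧ IsPAEvalWith pd X x Fs G B

/-- `(G, B)` is an acyclic positive dependency evaluation for `x` on `X`. -/
def AcyclicEval (X : Set α) (x : α) (G : List α) (B : Set α) : Prop :=
  D.PAEval X x ∅ G B

/-- The standard discarded set `X⁺`. -/
def stdDiscarded (X : Set α) : Set α :=
  {a | ∀ Fs G B, D.PAEval Set.univ a Fs G B → (B ∩ X).Nonempty}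

/-- The partially acyclic discarded set `X^{p+}`. -/
def pDiscarded (X : Set α) : Set α :=
  {a | ¬ ∃ Fs G B, D.PAEval Set.univ a Fs G B ∧ Fs ⊆ X ∧ B ∩ X = ∅}

/-- The acyclic discarded set `X^{a+}`. -/
def aDiscarded (X : Set α) : Set α :=
  {a | ∀ G B, D.AcyclicEval Set.univ a G B → (B ∩ X).Nonempty}

/-- The standard range of `X`. -/
noncomputable def stdRange (X : Set α) : Interp α := mkInterp X (D.stdDiscarded X \ X)

/-- The partially acyclic range of `X`. -/
noncomputable def pRange (X : Set α) : Interp α := mkInterp X (D.pDiscarded X \ X)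

/-- The acyclic range of `X`. -/
noncomputable def aRange (X : Set α) : Interp α := mkInterp X (D.aDiscarded X \ X)

/-- Conflict-freeness in an ADF. -/
def ConflictFree (X : Set α) : Prop := ∀ s ∈ X, D.C s (X ∩ D.par s) = true

/-- pd-acyclic conflict-freeness in an ADF. -/
def PDAcyclicCF (X : Set α) : Prop :=
  ∀ a ∈ X, ∃ G B, D.AcyclicEval X a G B ∧ B ∩ X = ∅

def CCAdmissible (X : Set α) : Prop :=
  D.ConflictFree X ∧ ∀ e ∈ X, D.DecisivelyIn (D.stdRange X) e

def CA2Admissible (X : Set α) : Prop :=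
  D.ConflictFree X ∧ ∀ e ∈ X, D.DecisivelyIn (D.pRange X) e

def AAAdmissible (X : Set α) : Prop :=
  D.PDAcyclicCF X ∧ ∀ e ∈ X, D.DecisivelyIn (D.aRange X) e

def CCComplete (X : Set α) : Prop :=
  D.CCAdmissible X ∧ ∀ e, D.DecisivelyIn (D.stdRange X) e → e ∈ X

def CA2Complete (X : Set α) : Prop :=
  D.CA2Admissible X ∧ ∀ e, D.DecisivelyIn (D.pRange X) e → e ∈ X

def AAComplete (X : Set α) : Prop :=
  D.AAAdmissible X ∧ ∀ e, D.DecisivelyIn (D.aRange X) e → e ∈ X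

def CCPreferred (X : Set α) : Prop :=
  D.CCAdmissible X ∧ ∀ Y, D.CCAdmissible Y → X ⊆ Y → X = Y

def CA2Preferred (X : Set α) : Prop :=
  D.CA2Admissible X ∧ ∀ Y, D.CA2Admissible Y → X ⊆ Y → X = Y

def AAPreferred (X : Set α) : Prop :=
  D.AAAdmissible X ∧ ∀ Y, D.AAAdmissible Y → X ⊆ Y → X = Y

/-- `X` is a model of the ADF. -/
def IsModel (X : Set α) : Prop :=
  D.ConflictFree X ∧ ∀ a, a ∉ X → D.C a (X ∩ D.par a) = false

/-- `X` is a stable extension of the ADF. -/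
def IsStable (X : Set α) : Prop :=
  D.PDAcyclicCF X ∧ D.aDiscarded X = Xᶜ

/-- `X` is the grounded extension (the least cc-complete extension). -/
def IsGrounded (X : Set α) : Prop :=
  D.CCComplete X ∧ ∀ Y, D.CCComplete Y → X ⊆ Y

/-- `X` is the acyclic grounded extension (the least aa-complete extension). -/
def IsAcyclicGrounded (X : Set α) : Prop :=
  D.AAComplete X ∧ ∀ Y, D.AAComplete Y → X ⊆ Y

/-- The link `(r,s)` is supporting. -/
def Supporting (r s : α) : Prop :=
  ¬ ∃ R' ⊆ D.par s, D.C s R' = true ∧ D.C s (R' ∪ {r}) = false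

/-- The link `(r,s)` is attacking. -/
def Attacking (r s : α) : Prop :=
  ¬ ∃ R' ⊆ D.par s, D.C s R' = false ∧ D.C s (R' ∪ {r}) = true

/-- Bipolar ADFs. -/
def IsBADF : Prop := ∀ r s, D.L r s → D.Supporting r s ∨ D.Attacking r s

/-- Positive dependency acyclic ADFs (AADF⁺): every partially acyclic evaluation is acyclic. -/
def IsAADFplus : Prop := ∀ X x Fs G B, D.PAEval X x Fs G B → Fs = ∅

end ADF

/-! ### Frameworks with sets of attacking arguments (SETAFs) -/

/-- A framework with sets of attacking arguments. -/
structure SETAF (α : Type u) where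
  R : Set α → α → Prop
  nonempty_of_R : ∀ S a, R S a → S.Nonempty

namespace SETAF

variable (sf : SETAF α)

/-- `X` is conflict-free in the SETAF. -/
def ConflictFree (X : Set α) : Prop := ¬ ∃ S ⊆ X, ∃ a ∈ X, sf.R S a

/-- The discarded set of `X` in the SETAF. -/
def discarded (X : Set α) : Set α := {b | ∃ S ⊆ X, sf.R S b}

/-- `X` defends `a` in the SETAF. -/
def Defends (X : Set α) (a : α) : Prop :=
  ∀ S, sf.R S a → ∃ s ∈ S, s ∈ sf.discarded X

def Admissible (X : Set α) : Prop := sf.ConflictFree X ∧ ∀ a ∈ X, sf.Defends X a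

def Complete (X : Set α) : Prop := sf.Admissible X ∧ ∀ a, sf.Defends X a → a ∈ X

def Preferred (X : Set α) : Prop :=
  sf.Admissible X ∧ ∀ Y, sf.Admissible Y → X ⊆ Y → X = Y

/-- `X` is the grounded extension: the least complete extension. -/
def IsGrounded (X : Set α) : Prop := sf.Complete X ∧ ∀ Y, sf.Complete Y → X ⊆ Y

def Stable (X : Set α) : Prop := sf.ConflictFree X ∧ sf.discarded X = Xᶜ

/-- The ADF corresponding to a SETAF. -/
noncomputable def toADF : ADF α where
  L x y := ∃ B : Set α, x ∈ B ∧ sf.R B y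
  C a B := decide (¬ ∃ S, sf.R S a ∧ S ⊆ B)

end SETAF

/-! ### Extended argumentation frameworks with collective defense attacks (EAFCs) -/

/-- An EAFC: binary attacks `R` and collective defense attacks `D` on attacks. -/
structure EAFC (α : Type u) where
  R : α → α → Prop
  D : Set α → α → α → Prop
  nonempty_of_D : ∀ C a b, D C a b → C.Nonempty
  attack_of_D : ∀ C a b, D C a b → R a b

namespace EAFC

variable (E : EAFC α)

/-- `a` defeats `b` w.r.t. `X`. -/
def Defeats (X : Set α) (a b : α) : Prop :=
  E.R a b ∧ ¬ ∃ C ⊆ X, E.D C a b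

/-- `RS` is a reinstatement set on `X` for the defeat of `b` by `a`. -/
def Reinstatement (X : Set α) (RS : Set (α × α)) (a b : α) : Prop :=
  RS.Finite ∧
  (∀ p ∈ RS, p.1 ∈ X ∧ E.Defeats X p.1 p.2) ∧
  (a, b) ∈ RS ∧
  ∀ p ∈ RS, ∀ C : Set α, E.D C p.1 p.2 → ∃ q ∈ RS, q.2 ∈ C

/-- The discarded set `X⁺` of `X` in the EAFC. -/
def discarded (X : Set α) : Set α :=
  {b | ∃ a ∈ X, E.Defeats X a b ∧ ∃ RS, E.Reinstatement X RS a b}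

/-- `X` defends `a` in the EAFC. -/
def Defends (X : Set α) (a : α) : Prop :=
  ∀ b, E.Defeats X b a → b ∈ E.discarded X

/-- `X` is conflict-free in the EAFC. -/
def ConflictFree (X : Set α) : Prop := ¬ ∃ a ∈ X, ∃ b ∈ X, E.Defeats X a b

def Admissible (X : Set α) : Prop := E.ConflictFree X ∧ ∀ a ∈ X, E.Defends X a

def Complete (X : Set α) : Prop := E.Admissible X ∧ ∀ a, E.Defends X a → a ∈ X

def Preferred (X : Set α) : Prop :=
  E.Admissible X ∧ ∀ Y, E.Admissible Y → X ⊆ Y → X = Y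

def Stable (X : Set α) : Prop :=
  E.ConflictFree X ∧ ∀ b, b ∉ X → ∃ a ∈ X, E.Defeats X a b

/-- The characteristic function of the EAFC. -/
def charFun (X : Set α) : Set α := {a | E.Defends X a}

/-- The grounded extension of the EAFC. -/
def grounded : Set α := ⋃ i : ℕ, E.charFun^[i] ∅

/-- Every argument has finitely many attackers, every attack finitely many defense attackers. -/
def Finitary : Prop :=
  (∀ a, {b | E.R b a}.Finite) ∧ ∀ a b, {C | E.D C a b}.Finite

/-- Strong consistency of an EAFC. -/
def StronglyConsistent : Prop :=
  ¬ ∃ (x y z : α) (X : Set α), E.R x y ∧ x ∈ X ∧ E.D X z y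

/-- The EAFC is bounded hierarchical. -/
def BoundedHierarchical : Prop :=
  ∃ n : ℕ, ∃ hn : 0 < n,
    ∃ (As : Fin n → Set α) (Rs : Fin n → α → α → Prop)
      (Ds : Fin n → Set α → α → α → Prop),
      (∀ C a b, ¬ Ds ⟨n - 1, Nat.sub_lt hn one_pos⟩ C a b) ∧
      (Set.univ = ⋃ i, As i) ∧
      (∀ a b, E.R a b ↔ ∃ i, Rs i a b) ∧
      (∀ C a b, E.D C a b ↔ ∃ i, Ds i C a b) ∧
      (∀ i a b, Rs i a b → a ∈ As i ∧ b ∈ As i) ∧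
      (∀ i C a b, Ds i C a b → Rs i a b ∧
        ∃ h : (i : ℕ) + 1 < n, C ⊆ As ⟨(i : ℕ) + 1, h⟩)

/-- The ADF corresponding to a strongly consistent EAFC. -/
noncomputable def toADF : ADF α where
  L a b := E.R a b ∨ ∃ (c : α) (X : Set α), a ∈ X ∧ E.D X c b
  C a B := decide (¬ ∃ x ∈ B, E.R x a ∧ ¬ ∃ B' ⊆ B, E.D B' x a)

end EAFC

/-! ### Argumentation frameworks with necessities (AFNs) -/

/-- An AFN: binary attacks `R` and necessity relation `N`. -/
structure AFN (α : Type u) where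
  R : α → α → Prop
  N : Set α → α → Prop
  nonempty_of_N : ∀ B a, N B a → B.Nonempty

namespace AFN

variable (fn : AFN α)

/-- `G` is a powerful sequence for `a` on `X`. -/
def PowerfulSeq (X : Set α) (G : List α) (a : α) : Prop :=
  G ≠ [] ∧ (∀ b ∈ G, b ∈ X) ∧ G.getLast? = some a ∧
  ∀ i : ℕ, ∀ h : i < G.length, ∀ B : Set α, fn.N B (G.get ⟨i, h⟩) →
    ∃ j : ℕ, ∃ hj : j < G.length, j < i ∧ G.get ⟨j, hj⟩ ∈ B

/-- `a` is powerful in `X`. -/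
def Powerful (X : Set α) (a : α) : Prop :=
  a ∈ X ∧ ∃ G, fn.PowerfulSeq X G a

/-- `X` is coherent. -/
def Coherent (X : Set α) : Prop := ∀ a ∈ X, fn.Powerful X a

/-- The discarded set `X^att` of `X` in the AFN. -/
def discardedAtt (X : Set α) : Set α :=
  {a | ∀ C, fn.Coherent C → a ∈ C → ∃ c ∈ C, ∃ e ∈ X, fn.R e c}

/-- `X` is conflict-free in the AFN. -/
def ConflictFree (X : Set α) : Prop := ¬ ∃ a ∈ X, ∃ b ∈ X, fn.R a b

/-- `X` is strongly coherent. -/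
def StronglyCoherent (X : Set α) : Prop := fn.ConflictFree X ∧ fn.Coherent X

/-- The deactivated set `X⁺` of `X` in the AFN. -/
def deactivated (X : Set α) : Set α :=
  {a | (∃ e ∈ X, fn.R e a) ∨ ∃ B, fn.N B a ∧ X ∩ B = ∅}

/-- `X` defends `a` in the AFN. -/
def Defends (X : Set α) (a : α) : Prop :=
  fn.Coherent (X ∪ {a}) ∧ ∀ b, fn.R b a → b ∈ fn.discardedAtt X

def Admissible (X : Set α) : Prop := fn.StronglyCoherent X ∧ ∀ a ∈ X, fn.Defends X a

def Complete (X : Set α) : Prop := fn.Admissible X ∧ ∀ a, fn.Defends X a → a ∈ X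

def Preferred (X : Set α) : Prop :=
  fn.Admissible X ∧ ∀ Y, fn.Admissible Y → X ⊆ Y → X = Y

/-- `X` is the grounded extension: the least complete extension. -/
def IsGrounded (X : Set α) : Prop := fn.Complete X ∧ ∀ Y, fn.Complete Y → X ⊆ Y

/-- Stability via completeness and the deactivated set. -/
def Stable (X : Set α) : Prop := fn.Complete X ∧ fn.deactivated X = Xᶜ

/-- Stability via strong coherence and the discarded set. -/
def StableAtt (X : Set α) : Prop :=
  fn.StronglyCoherent X ∧ fn.discardedAtt X = Xᶜ

/-- Strong consistency of an AFN: no argument is both supported and attacked by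
the same argument. -/
def StronglyConsistent : Prop :=
  ∀ a : α, {b | ∃ B, b ∈ B ∧ fn.N B a} ∩ {b | fn.R b a} = ∅

/-- The ADF corresponding to a strongly consistent AFN. -/
noncomputable def toADF : ADF α where
  L x y := fn.R x y ∨ ∃ B, x ∈ B ∧ fn.N B y
  C a P := decide (¬ ((∃ p ∈ P, fn.R p a) ∨ ∃ Z, fn.N Z a ∧ Z ∩ P = ∅))

end AFN

end Dialectical

namespace Dialectical

open Set

variable {α : Type u}

/-! ### Interpretation basics -/

lemma tset_mk (T F : Set α) : tset (mkInterp T F) = T := by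
  ext a; simp only [tset, mkInterp, Set.mem_setOf_eq]
  by_cases hT : a ∈ T <;> by_cases hF : a ∈ F <;> simp [hT, hF]

lemma fset_mk (T F : Set α) : fset (mkInterp T F) = F \ T := by
  ext a; simp only [fset, mkInterp, Set.mem_setOf_eq]
  by_cases hT : a ∈ T <;> by_cases hF : a ∈ F <;> simp [hT, hF]

lemma idom_mk (T F : Set α) : idom (mkInterp T F) = T ∪ F := by
  ext a; simp only [idom, mkInterp, Set.mem_setOf_eq]
  by_cases hT : a ∈ T <;> by_cases hF : a ∈ F <;> simp [hT, hF]

lemma tset_disj_fset (v : Interp α) : tset v ∩ fset v = ∅ := by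
  ext a; simp only [Set.mem_inter_iff, tset, fset, Set.mem_setOf_eq, Set.mem_empty_iff_false,
    iff_false, not_and]
  intro h1 h2; rw [h1] at h2; exact Bool.noConfusion (Option.some.inj h2)

lemma interp_eq_mk (v : Interp α) : v = mkInterp (tset v) (fset v) := by
  funext a
  simp only [mkInterp]
  by_cases ht : a ∈ tset v
  · simp [ht]; exact ht
  · by_cases hf : a ∈ fset v
    · simp [ht, hf]; exact hf
    · simp [ht, hf]
      match hv : v a with
      | none => rfl
      | some true => exact absurd hv ht
      | some false => exact absurd hv hf

lemma idom_eq_union (v : Interp α) : idom v = tset v ∪ fset v := by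
  conv_lhs => rw [interp_eq_mk v]
  exact idom_mk _ _

end Dialectical

namespace Dialectical

open Set

variable {α : Type u}

/-! ### Decisiveness via sets -/

lemma decIn_mk_iff (D : ADF α) (T F : Set α) (e : α) (hTF : T ∩ F = ∅) :
    D.DecisivelyIn (mkInterp T F) e ↔
      ∀ S : Set α, T ∩ D.par e ⊆ S → S ⊆ D.par e → S ∩ F = ∅ → D.C e S = true := by
  constructor
  · intro hv S h1 h2 h3
    set w : Interp α := fun a =>
      if a ∈ T then some true else if a ∈ S then some true
      else if a ∈ F ∪ D.par e then some false else none with hw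
    have hwval : ∀ a, w a = (if a ∈ T then some true else if a ∈ S then some true
      else if a ∈ F ∪ D.par e then some false else none) := fun a => rfl
    have hidom : idom w = (T ∪ F) ∪ D.par e := by
      ext a
      simp only [idom, Set.mem_setOf_eq, hwval]
      constructor
      · intro ha
        by_cases hT : a ∈ T
        · exact Or.inl (Or.inl hT)
        by_cases hS : a ∈ S
        · exact Or.inr (h2 hS)
        by_cases hFP : a ∈ F ∪ D.par e
        · rcases hFP with h | h
          · exact Or.inl (Or.inr h)
          · exact Or.inr h
        · rw [if_neg hT, if_neg hS, if_neg hFP] at ha; exact absurd rfl ha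
      · intro ha
        by_cases hT : a ∈ T
        · rw [if_pos hT]; exact Option.some_ne_none _
        by_cases hS : a ∈ S
        · rw [if_neg hT, if_pos hS]; exact Option.some_ne_none _
        have hFP : a ∈ F ∪ D.par e := by
          rcases ha with (h | h) | h
          · exact absurd h hT
          · exact Or.inl h
          · exact Or.inr h
        rw [if_neg hT, if_neg hS, if_pos hFP]; exact Option.some_ne_none _
    have hcomp : Completion (mkInterp T F) w (idom (mkInterp T F) ∪ D.par e) := by
      refine ⟨by rw [hidom, idom_mk], ?_⟩
      intro a ha
      rw [idom_mk] at ha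
      rcases ha with hT | hF
      · rw [hwval a, if_pos hT]
        simp only [mkInterp, if_pos hT]
      · by_cases hT : a ∈ T
        · rw [hwval a, if_pos hT]
          simp only [mkInterp, if_pos hT]
        · have hS : a ∉ S := fun hS => (Set.eq_empty_iff_forall_notMem.1 h3 a) ⟨hS, hF⟩
          rw [hwval a, if_neg hT, if_neg hS, if_pos (Set.mem_union_left _ hF)]
          simp only [mkInterp, if_neg hT, if_pos hF]
    have := hv w hcomp
    have htw : tset w ∩ D.par e = S := by
      ext a
      simp only [tset, Set.mem_inter_iff, Set.mem_setOf_eq, hwval]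
      constructor
      · rintro ⟨ha, hpar⟩
        by_cases hT : a ∈ T
        · exact h1 ⟨hT, hpar⟩
        by_cases hS : a ∈ S
        · exact hS
        · exfalso
          rw [if_neg hT, if_neg hS] at ha
          by_cases hFP : a ∈ F ∪ D.par e
          · rw [if_pos hFP] at ha; exact Bool.noConfusion (Option.some.inj ha)
          · rw [if_neg hFP] at ha; cases ha
      · intro hS
        refine ⟨?_, h2 hS⟩
        by_cases hT : a ∈ T
        · rw [if_pos hT]
        · rw [if_neg hT, if_pos hS]
    rwa [ADF.evalCond, htw] at this
  · intro hS w hcomp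
    rw [ADF.evalCond]
    apply hS
    · intro a ⟨haT, hapar⟩
      have : a ∈ idom (mkInterp T F) := by rw [idom_mk]; exact Or.inl haT
      have hwa := hcomp.2 a this
      constructor
      · show w a = some true
        rw [hwa]; simp only [mkInterp, if_pos haT]
      · exact hapar
    · exact Set.inter_subset_right
    · ext a
      simp only [Set.mem_inter_iff, Set.mem_empty_iff_false, iff_false, not_and]
      rintro ⟨hat, hapar⟩ haF
      have hT : a ∉ T := fun hT => (Set.eq_empty_iff_forall_notMem.1 hTF a) ⟨hT, haF⟩
      have : a ∈ idom (mkInterp T F) := by rw [idom_mk]; exact Or.inr haF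
      have hwa := hcomp.2 a this
      have hat' : w a = some true := hat
      rw [hwa] at hat'
      simp only [mkInterp, if_neg hT, if_pos haF] at hat'
      exact Bool.noConfusion (Option.some.inj hat')

lemma decIn_iff' (D : ADF α) (v : Interp α) (e : α) :
    D.DecisivelyIn v e ↔
      ∀ S : Set α, tset v ∩ D.par e ⊆ S → S ⊆ D.par e → S ∩ fset v = ∅ → D.C e S = true := by
  conv_lhs => rw [interp_eq_mk v]
  exact decIn_mk_iff D _ _ e (tset_disj_fset v)

/-! ### Existence of minimal decisively-in interpretations -/

lemma exists_minDecIn_le (D : ADF α) [Fintype α] {e : α} {w₀ : Interp α}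
    (h₀ : D.DecisivelyIn w₀ e) :
    ∃ v, D.MinDecIn v e ∧ tset v ⊆ tset w₀ ∧ fset v ⊆ fset w₀ := by
  have key : ∀ n (w : Interp α), (tset w).ncard + (fset w).ncard = n →
      D.DecisivelyIn w e → ∃ v, D.MinDecIn v e ∧ tset v ⊆ tset w ∧ fset v ⊆ fset w := by
    intro n
    induction n using Nat.strong_induction_on with
    | _ n ih =>
      intro w hn hdec
      by_cases hm : ∀ w', D.DecisivelyIn w' e → tset w' ⊆ tset w → fset w' ⊆ fset w →
          tset w' = tset w ∧ fset w' = fset w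
      · exact ⟨w, ⟨hdec, hm⟩, subset_rfl, subset_rfl⟩
      · push_neg at hm
        obtain ⟨w', hdec', ht, hf, hne⟩ := hm
        have hlt : (tset w').ncard + (fset w').ncard < n := by
          rw [← hn]
          by_cases hteq : tset w' = tset w
          · have hfne : fset w' ≠ fset w := fun hh => hne hteq hh
            have h1 : (fset w').ncard < (fset w).ncard :=
              Set.ncard_lt_ncard (ssubset_of_subset_of_ne hf hfne) (Set.toFinite _)
            have h2 : (tset w').ncard ≤ (tset w).ncard := Set.ncard_le_ncard ht (Set.toFinite _)
            omega
          · have h1 : (tset w').ncard < (tset w).ncard :=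
              Set.ncard_lt_ncard (ssubset_of_subset_of_ne ht hteq) (Set.toFinite _)
            have h2 : (fset w').ncard ≤ (fset w).ncard := Set.ncard_le_ncard hf (Set.toFinite _)
            omega
        obtain ⟨v, hv, hvt, hvf⟩ := ih _ hlt w' rfl hdec'
        exact ⟨v, hv, hvt.trans ht, hvf.trans hf⟩
  exact key _ w₀ rfl h₀

lemma decIn_allFalse (D : ADF α) (e : α) (hC : D.C e ∅ = true) :
    D.DecisivelyIn (mkInterp ∅ (D.par e)) e := by
  rw [decIn_mk_iff D _ _ e (by simp)]
  intro S h1 h2 h3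
  have hSe : S = ∅ := by
    rw [← h3]
    ext a
    simp only [Set.mem_inter_iff, iff_self_and]
    exact fun ha => h2 ha
  rwa [hSe]

lemma minDecIn_idom_subset (D : ADF α) {v : Interp α} {e : α} (hv : D.MinDecIn v e) :
    idom v ⊆ D.par e := by
  intro p hp
  by_contra hpar
  set w := mkInterp (tset v \ {p}) (fset v \ {p}) with hw
  have htw : tset w = tset v \ {p} := tset_mk _ _
  have hfw : fset w = fset v \ {p} := by
    rw [hw, fset_mk]
    ext a
    simp only [Set.mem_diff, Set.mem_singleton_iff]
    constructor
    · rintro ⟨⟨h1, h2⟩, _⟩; exact ⟨h1, h2⟩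
    · rintro ⟨h1, h2⟩
      refine ⟨⟨h1, h2⟩, fun hmem => ?_⟩
      exact (Set.eq_empty_iff_forall_notMem.1 (tset_disj_fset v) a) ⟨hmem.1, h1⟩
  have hdecw : D.DecisivelyIn w e := by
    rw [decIn_iff', htw, hfw]
    intro S h1 h2 h3
    apply (decIn_iff' D v e).1 hv.1 S
    · intro a ⟨hat, hapar⟩
      apply h1
      exact ⟨⟨hat, fun hap => hpar (by rwa [Set.mem_singleton_iff.1 hap] at hapar)⟩, hapar⟩
    · exact h2
    · ext a
      simp only [Set.mem_inter_iff, Set.mem_empty_iff_false, iff_false, not_and]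
      intro haS haf
      have hane : a ≠ p := fun hap => hpar (by rw [← hap]; exact h2 haS)
      exact (Set.eq_empty_iff_forall_notMem.1 h3 a) ⟨haS, ⟨haf, hane⟩⟩
  have heq := hv.2 w hdecw (htw ▸ Set.diff_subset) (hfw ▸ Set.diff_subset)
  have hpt : p ∉ tset v := by
    intro hpt
    have h1 := heq.1
    rw [htw] at h1
    have : p ∈ tset v \ {p} := by rw [h1]; exact hpt
    exact this.2 rfl
  have hpf : p ∉ fset v := by
    intro hpf
    have h1 := heq.2
    rw [hfw] at h1
    have : p ∈ fset v \ {p} := by rw [h1]; exact hpf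
    exact this.2 rfl
  rw [idom_eq_union] at hp
  rcases hp with hp | hp
  · exact hpt hp
  · exact hpf hp

end Dialectical

namespace Dialectical

open Set

variable {α : Type u}

/-! ### pd-function builders -/

lemma pdT_eq (pd : α → Option (Interp α)) {a : α} {v : Interp α} (h : pd a = some v) :
    pdT pd a = tset v := by
  ext b
  simp only [pdT, Set.mem_setOf_eq]
  constructor
  · rintro ⟨v', hv', hb⟩
    rw [h] at hv'
    obtain rfl := Option.some.inj hv'
    exact hb
  · intro hb
    exact ⟨v, h, hb⟩

lemma pdF_eq (pd : α → Option (Interp α)) {a : α} {v : Interp α} (h : pd a = some v) :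
    pdF pd a = fset v := by
  ext b
  simp only [pdF, Set.mem_setOf_eq]
  constructor
  · rintro ⟨v', hv', hb⟩
    rw [h] at hv'
    obtain rfl := Option.some.inj hv'
    exact hb
  · intro hb
    exact ⟨v, h, hb⟩

lemma maxSound_univ (D : ADF α) (pd : α → Option (Interp α))
    (h1 : ∀ a v, pd a = some v → D.MinDecIn v a) (h2 : ∀ a, pd a ≠ none) :
    D.MaxSound Set.univ pd := by
  constructor
  · intro a _
    exact ⟨fun v hv => ⟨h1 a v hv, Set.subset_univ _⟩, fun hn => absurd hn (h2 a)⟩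
  · rintro ⟨X'', pd', _, _, hss, hsub, _⟩
    have hsd : soundDom Set.univ pd = Set.univ := by
      ext a
      simp only [soundDom, Set.mem_setOf_eq, Set.mem_univ, true_and, iff_true]
      exact h2 a
    rw [hsd] at hss
    exact hss.2 (fun a _ => trivial)

lemma maxSound_of_total (D : ADF α) (X : Set α) (pd : α → Option (Interp α))
    (h1 : ∀ a ∈ X, ∀ v, pd a = some v → D.MinDecIn v a ∧ tset v ⊆ X)
    (h2 : ∀ a ∈ X, pd a ≠ none) :
    D.MaxSound X pd := by
  constructor
  · intro a ha
    exact ⟨h1 a ha, fun hn => absurd hn (h2 a ha)⟩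
  · rintro ⟨X'', pd', _, _, hss, hsub, _⟩
    have hsd : soundDom X pd = X := by
      ext a
      simp only [soundDom, Set.mem_setOf_eq, and_iff_left_iff_imp]
      exact h2 a
    rw [hsd] at hss
    exact hss.2 hsub

lemma exists_pd_of_choices (D : ADF α) [Fintype α] (t f : α → Set α)
    (hdec : ∀ a, D.DecisivelyIn (mkInterp (t a) (f a)) a) :
    ∃ pd : α → Option (Interp α), (∀ a v, pd a = some v → D.MinDecIn v a) ∧
      (∀ a, pd a ≠ none) ∧ (∀ a, pdT pd a ⊆ t a) ∧ (∀ a, pdF pd a ⊆ f a) := by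
  choose v hv ht hf using fun a => exists_minDecIn_le D (hdec a)
  refine ⟨fun a => some (v a), fun a v' hv' => ?_, fun a => Option.some_ne_none _,
    fun a => ?_, fun a => ?_⟩
  · obtain rfl := Option.some.inj hv'
    exact hv a
  · rw [pdT_eq _ (rfl : some (v a) = some (v a))]
    exact (ht a).trans (by rw [tset_mk])
  · rw [pdF_eq _ (rfl : some (v a) = some (v a))]
    refine (hf a).trans ?_
    rw [fset_mk]
    exact Set.diff_subset

/-! ### Basic facts about the EAFC-induced ADF -/

namespace EAFC

variable (E : EAFC α)

lemma C_true_iff (e : α) (B : Set α) :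
    E.toADF.C e B = true ↔ ∀ x ∈ B, E.R x e → ∃ C ⊆ B, E.D C x e := by
  show decide _ = true ↔ _
  rw [decide_eq_true_iff]
  constructor
  · intro hn x hx hR
    by_contra hc
    exact hn ⟨x, hx, hR, hc⟩
  · rintro hall ⟨x, hx, hR, hc⟩
    exact hc (hall x hx hR)

lemma C_empty (e : α) : E.toADF.C e ∅ = true := by
  rw [C_true_iff]
  intro x hx
  exact absurd hx (Set.notMem_empty x)

lemma mem_par_attack {x a : α} (hx : E.R x a) : x ∈ E.toADF.par a := Or.inl hx

lemma mem_par_def {y a c : α} {C : Set α} (hD : E.D C c a) (hy : y ∈ C) :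
    y ∈ E.toADF.par a := Or.inr ⟨c, C, hy, hD⟩

lemma sc_not_attack (hsc : E.StronglyConsistent) {C : Set α} {z y x : α}
    (hD : E.D C z y) (hx : x ∈ C) : ¬E.R x y := fun hR => hsc ⟨x, y, z, C, hR, hx, hD⟩

/-- P1: every minimal decisively-in interpretation either falsifies an attacker or
provides a defense set inside its true part. -/
lemma minDecIn_cover (hsc : E.StronglyConsistent) {v : Interp α} {e : α}
    (hv : E.toADF.MinDecIn v e) {x : α} (hx : E.R x e) :
    x ∈ fset v ∨ ∃ C ⊆ tset v, E.D C x e := by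
  by_cases hxf : x ∈ fset v
  · exact Or.inl hxf
  right
  have hidom := minDecIn_idom_subset E.toADF hv
  have htpar : tset v ⊆ E.toADF.par e := fun b hb =>
    hidom (by rw [idom_eq_union]; exact Or.inl hb)
  have hC := (decIn_iff' E.toADF v e).1 hv.1 (insert x (tset v))
    (fun b hb => Set.mem_insert_of_mem _ hb.1)
    (by
      intro b hb
      rcases Set.mem_insert_iff.1 hb with hb | hb
      · rw [hb]; exact E.mem_par_attack hx
      · exact htpar hb)
    (by
      ext b
      simp only [Set.mem_inter_iff, Set.mem_empty_iff_false, iff_false, not_and]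
      intro hb hbf
      rcases Set.mem_insert_iff.1 hb with hb | hb
      · rw [hb] at hbf; exact hxf hbf
      · exact (Set.eq_empty_iff_forall_notMem.1 (tset_disj_fset v) b) ⟨hb, hbf⟩)
  obtain ⟨C, hCsub, hCD⟩ := (E.C_true_iff e _).1 hC x (Set.mem_insert _ _) hx
  refine ⟨C, fun y hy => ?_, hCD⟩
  rcases Set.mem_insert_iff.1 (hCsub hy) with hyx | hyt
  · exact absurd hx (by rw [← hyx]; exact E.sc_not_attack hsc hCD hy)
  · exact hyt

/-- Decisive-in interpretation from a cover by defense sets. -/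
lemma decIn_mk_of_cover (hsc : E.StronglyConsistent) (a : α) (T F : Set α)
    (hTatt : ∀ x ∈ T, ¬E.R x a) (hF : ∀ x ∈ F, E.R x a)
    (hcov : ∀ x, E.R x a → x ∈ F ∨ ∃ C ⊆ T, E.D C x a) :
    E.toADF.DecisivelyIn (mkInterp T F) a := by
  have hTF : T ∩ F = ∅ := by
    ext b
    simp only [Set.mem_inter_iff, Set.mem_empty_iff_false, iff_false, not_and]
    exact fun hb hbf => absurd (hF b hbf) (hTatt b hb)
  rw [decIn_mk_iff _ _ _ _ hTF]
  intro S h1 h2 h3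
  rw [C_true_iff]
  intro x hxS hR
  rcases hcov x hR with hxF | ⟨C, hCT, hCD⟩
  · have hmem : x ∈ S ∩ F := ⟨hxS, hxF⟩
    rw [h3] at hmem
    exact absurd hmem (Set.notMem_empty x)
  · refine ⟨C, fun y hy => h1 ⟨hCT hy, E.mem_par_def hCD hy⟩, hCD⟩

end EAFC

end Dialectical

namespace Dialectical

open Set

variable {α : Type u}

namespace EAFC

variable (E : EAFC α)

/-! ### Conflict-freeness and stability -/

lemma cf_iff (X : Set α) : E.ConflictFree X ↔ E.toADF.ConflictFree X := by
  constructor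
  · intro hcf s hs
    rw [C_true_iff]
    rintro x ⟨hxX, _⟩ hR
    have hnd : ¬E.Defeats X x s := fun hd => hcf ⟨x, hxX, s, hs, hd⟩
    rw [Defeats, not_and] at hnd
    have := hnd hR
    push_neg at this
    obtain ⟨C, hCX, hCD⟩ := this
    exact ⟨C, fun y hy => ⟨hCX hy, E.mem_par_def hCD hy⟩, hCD⟩
  · rintro hADF ⟨a, ha, b, hb, hR, hnC⟩
    obtain ⟨C, hCsub, hCD⟩ := (E.C_true_iff b _).1 (hADF b hb) a ⟨ha, E.mem_par_attack hR⟩ hR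
    exact hnC ⟨C, fun y hy => (hCsub hy).1, hCD⟩

lemma stable_iff (X : Set α) : E.Stable X ↔ E.toADF.IsModel X := by
  constructor
  · rintro ⟨hcf, hst⟩
    refine ⟨(E.cf_iff X).1 hcf, fun b hb => ?_⟩
    obtain ⟨a, haX, hR, hnC⟩ := hst b hb
    cases hC : E.toADF.C b (X ∩ E.toADF.par b) with
    | false => rfl
    | true =>
      obtain ⟨C, hCsub, hCD⟩ := (E.C_true_iff b _).1 hC a ⟨haX, E.mem_par_attack hR⟩ hR
      exact absurd ⟨C, fun y hy => (hCsub hy).1, hCD⟩ hnC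
  · rintro ⟨hADF, hmod⟩
    refine ⟨(E.cf_iff X).2 hADF, fun b hb => ?_⟩
    have hC := hmod b hb
    have hnt : ¬(E.toADF.C b (X ∩ E.toADF.par b) = true) := by rw [hC]; simp
    rw [C_true_iff] at hnt
    push_neg at hnt
    obtain ⟨x, hxmem, hR, hnC⟩ := hnt
    refine ⟨x, hxmem.1, hR, ?_⟩
    rintro ⟨C, hCX, hCD⟩
    exact hnC C (fun y hy => ⟨hCX hy, E.mem_par_def hCD hy⟩) hCD

/-! ### Direction 1: discarded arguments admit no evaluations avoiding `X` -/

lemma eval_hits {X : Set α} (hsc : E.StronglyConsistent) (pd : α → Option (Interp α))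
    (hpd : ∀ a v, pd a = some v → E.toADF.MinDecIn v a)
    {b : α} {Fs : Set α} {G : List α} {B : Set α}
    (hev : IsPAEvalWith pd Set.univ b Fs G B)
    (hFsX : Fs ⊆ X) (hCF : E.ConflictFree X ∨ Fs = ∅)
    (hb : b ∈ E.discarded X) : (B ∩ X).Nonempty := by
  by_contra hne
  rw [Set.not_nonempty_iff_eq_empty] at hne
  obtain ⟨hGF, hnd, hbX, hFsU, hGU, hFsn, hGn, hGe, hGl, hord, hFsT, hFsco, hB⟩ := hev
  obtain ⟨a, haX, hdef, RS, hfin, hmem, habRS, hclose⟩ := hb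
  have claim1 : ∀ p ∈ RS, p.2 ∉ Fs := by
    intro p hp hpFs
    rcases hCF with hcf | hFse
    · exact hcf ⟨p.1, (hmem p hp).1, p.2, hFsX hpFs, (hmem p hp).2⟩
    · rw [hFse] at hpFs
      exact hpFs
  have claim2 : ∀ i, ∀ hi : i < G.length, ∀ p ∈ RS, p.2 ≠ G.get ⟨i, hi⟩ := by
    intro i
    induction i using Nat.strong_induction_on with
    | _ i ih =>
      intro hi p hp hpg
      set g := G.get ⟨i, hi⟩ with hg
      have hgG : g ∈ G := List.get_mem G _
      have hR : E.R p.1 g := by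
        have := (hmem p hp).2.1
        rwa [hpg] at this
      obtain ⟨v, hv⟩ := Option.ne_none_iff_exists'.1 (hGn g hgG)
      rcases E.minDecIn_cover hsc (hpd g v hv) hR with hxf | ⟨C, hCt, hCD⟩
      · have hBmem : p.1 ∈ B := by
          rw [hB]
          right
          exact Set.mem_biUnion hgG (by rw [pdF_eq pd hv]; exact hxf)
        exact (Set.eq_empty_iff_forall_notMem.1 hne p.1) ⟨hBmem, (hmem p hp).1⟩
      · have hDg : E.D C p.1 p.2 := by rw [hpg]; exact hCD
        obtain ⟨q, hq, hqC⟩ := hclose p hp C hDg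
        have hqin : q.2 ∈ pdT pd g := by
          rw [pdT_eq pd hv]
          exact hCt hqC
        rcases hord i hi hqin with hqFs | ⟨j, hj, hji, hgj⟩
        · exact claim1 q hq hqFs
        · exact ih j hji hj q hq hgj.symm
  by_cases hGnil : G = []
  · exact claim1 (a, b) habRS (hGe hGnil)
  · have hbG : b ∈ G := by
      obtain ⟨hne', heq⟩ := List.mem_getLast?_eq_getLast (Option.mem_def.2 (hGl hGnil))
      rw [heq]
      exact List.getLast_mem hne'
    obtain ⟨⟨i, hi⟩, hgi⟩ := List.mem_iff_get.1 hbG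
    exact claim2 i hi (a, b) habRS hgi.symm

lemma discarded_subset_pD (hsc : E.StronglyConsistent) {X : Set α} (hcf : E.ConflictFree X) :
    E.discarded X ⊆ E.toADF.pDiscarded X := by
  intro b hb
  rintro ⟨Fs, G, B, ⟨pd, hms, hev⟩, hFsX, hBX⟩
  have hpd : ∀ a v, pd a = some v → E.toADF.MinDecIn v a :=
    fun a v hv => ((hms.1 a trivial).1 v hv).1
  have := E.eval_hits hsc pd hpd hev hFsX (Or.inl hcf) hb
  rw [hBX] at this
  exact Set.not_nonempty_empty this

lemma mem_aDiscarded_of_discarded (hsc : E.StronglyConsistent) {Z Y : Set α} (hZY : Z ⊆ Y)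
    {b : α} (hb : b ∈ E.discarded Z) : b ∈ E.toADF.aDiscarded Y := by
  rintro G B ⟨pd, hms, hev⟩
  have hpd : ∀ a v, pd a = some v → E.toADF.MinDecIn v a :=
    fun a v hv => ((hms.1 a trivial).1 v hv).1
  have := E.eval_hits hsc pd hpd hev (Set.empty_subset _) (Or.inr rfl) hb
  obtain ⟨c, hcB, hcZ⟩ := this
  exact ⟨c, hcB, hZY hcZ⟩

end EAFC

end Dialectical

namespace Dialectical

open Set

variable {α : Type u}

namespace EAFC

variable (E : EAFC α)

/-! ### Reinstatement machinery: the greatest closed set of defeats and ranks -/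

/-- The set of defeats by members of `X`. -/
def XDef (X : Set α) : Set (α × α) := {p | p.1 ∈ X ∧ E.Defeats X p.1 p.2}

/-- The set of defeats by members of `X` that have a reinstatement set. -/
def Rein (X : Set α) : Set (α × α) :=
  {p | p ∈ E.XDef X ∧ ∃ RS, E.Reinstatement X RS p.1 p.2}

lemma rein_closed {X : Set α} {p : α × α} (hp : p ∈ E.Rein X) {C : Set α}
    (hC : E.D C p.1 p.2) : ∃ q ∈ E.Rein X, q.2 ∈ C := by
  obtain ⟨hpX, RS, hfin, hmem, hpRS, hclose⟩ := hp
  obtain ⟨q, hq, hqC⟩ := hclose (p.1, p.2) hpRS C hC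
  refine ⟨q, ⟨⟨(hmem q hq).1, (hmem q hq).2⟩, RS, hfin, hmem, ?_, hclose⟩, hqC⟩
  show (q.1, q.2) ∈ RS
  rwa [Prod.mk.eta]

lemma closed_subset_rein [Fintype α] {X : Set α} {S : Set (α × α)} (hS : S ⊆ E.XDef X)
    (hcl : ∀ p ∈ S, ∀ C, E.D C p.1 p.2 → ∃ q ∈ S, q.2 ∈ C) : S ⊆ E.Rein X := by
  intro p hp
  refine ⟨hS hp, S, Set.toFinite S, fun q hq => ⟨(hS hq).1, (hS hq).2⟩, ?_, hcl⟩
  show (p.1, p.2) ∈ S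
  rwa [Prod.mk.eta]

lemma discarded_eq_rein (X : Set α) : E.discarded X = {b | ∃ a, (a, b) ∈ E.Rein X} := by
  ext b
  constructor
  · rintro ⟨a, haX, hdef, RS, hRS⟩
    exact ⟨a, ⟨⟨haX, hdef⟩, RS, hRS⟩⟩
  · rintro ⟨a, ⟨⟨haX, hdef⟩, RS, hRS⟩⟩
    exact ⟨a, haX, hdef, RS, hRS⟩

/-- Iterated pruning of the set of defeats. -/
def TkSet (X : Set α) : ℕ → Set (α × α)
  | 0 => E.XDef X
  | k + 1 => {p ∈ TkSet X k | ∀ C, E.D C p.1 p.2 → ∃ q ∈ TkSet X k, q.2 ∈ C}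

lemma TkSet_zero (X : Set α) : E.TkSet X 0 = E.XDef X := rfl

lemma TkSet_succ (X : Set α) (k : ℕ) : E.TkSet X (k + 1) =
    {p ∈ E.TkSet X k | ∀ C, E.D C p.1 p.2 → ∃ q ∈ E.TkSet X k, q.2 ∈ C} := rfl

lemma TkSet_succ_subset (X : Set α) (k : ℕ) : E.TkSet X (k + 1) ⊆ E.TkSet X k := by
  rw [TkSet_succ]
  exact Set.sep_subset _ _

lemma TkSet_subset_xdef (X : Set α) : ∀ k, E.TkSet X k ⊆ E.XDef X
  | 0 => by rw [TkSet_zero]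
  | k + 1 => (E.TkSet_succ_subset X k).trans (TkSet_subset_xdef X k)

lemma rein_subset_TkSet (X : Set α) : ∀ k, E.Rein X ⊆ E.TkSet X k
  | 0 => by rw [TkSet_zero]; exact fun p hp => hp.1
  | k + 1 => by
      rw [TkSet_succ]
      intro p hp
      refine ⟨rein_subset_TkSet X k hp, fun C hC => ?_⟩
      obtain ⟨q, hq, hqC⟩ := E.rein_closed hp hC
      exact ⟨q, rein_subset_TkSet X k hq, hqC⟩

lemma exists_TkSet_stab [Fintype α] (X : Set α) : ∃ K, E.TkSet X (K + 1) = E.TkSet X K := by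
  by_contra hc
  push_neg at hc
  have key : ∀ k, (E.TkSet X k).ncard + k ≤ (E.TkSet X 0).ncard := by
    intro k
    induction k with
    | zero => omega
    | succ k ih =>
      have hlt : (E.TkSet X (k + 1)).ncard < (E.TkSet X k).ncard :=
        Set.ncard_lt_ncard (ssubset_of_subset_of_ne (E.TkSet_succ_subset X k) (hc k))
          (Set.toFinite _)
      omega
  have := key ((E.TkSet X 0).ncard + 1)
  omega

lemma TkSet_stab_subset_rein [Fintype α] {X : Set α} {K : ℕ}
    (hK : E.TkSet X (K + 1) = E.TkSet X K) : E.TkSet X K ⊆ E.Rein X := by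
  apply E.closed_subset_rein (E.TkSet_subset_xdef X K)
  intro p hp C hC
  rw [← hK, TkSet_succ] at hp
  exact hp.2 C hC

/-- Rank of a defeat: the first pruning stage at which it disappears. -/
noncomputable def rank (X : Set α) (p : α × α) : ℕ := sInf {k | p ∉ E.TkSet X (k + 1)}

lemma rank_not_mem [Fintype α] {X : Set α} {p : α × α} (hp : p ∉ E.Rein X) :
    p ∉ E.TkSet X (E.rank X p + 1) := by
  have hne : {k | p ∉ E.TkSet X (k + 1)}.Nonempty := by
    obtain ⟨K, hK⟩ := E.exists_TkSet_stab X
    exact ⟨K, fun hmem => hp (E.TkSet_stab_subset_rein hK (hK ▸ hmem))⟩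
  exact Nat.sInf_mem hne

lemma rank_mem [Fintype α] {X : Set α} {p : α × α} (hp0 : p ∈ E.XDef X) :
    p ∈ E.TkSet X (E.rank X p) := by
  cases hr : E.rank X p with
  | zero => exact hp0
  | succ m =>
    by_contra hmem
    have : m ∈ {k | p ∉ E.TkSet X (k + 1)} := hmem
    have := Nat.sInf_le this
    rw [rank] at hr
    omega

lemma rank_lt_of_not_mem [Fintype α] {X : Set α} {p : α × α} (hp0 : p ∈ E.XDef X) {k : ℕ}
    (hk : p ∉ E.TkSet X k) : E.rank X p < k := by
  cases k with
  | zero => exact absurd hp0 hk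
  | succ m =>
    have : m ∈ {k | p ∉ E.TkSet X (k + 1)} := hk
    have := Nat.sInf_le this
    rw [rank]
    omega

/-- The chosen defense set witnessing the failure of a reinstatement for a defeat. -/
lemma exists_unreinstated_defense [Fintype α] {X : Set α} {p : α × α}
    (hp0 : p ∈ E.XDef X) (hp : p ∉ E.Rein X) :
    ∃ C, E.D C p.1 p.2 ∧ ∀ q ∈ E.TkSet X (E.rank X p), q.2 ∉ C := by
  have h1 := E.rank_mem hp0
  have h2 := E.rank_not_mem hp
  rw [TkSet_succ] at h2
  have hnall : ¬∀ C, E.D C p.1 p.2 → ∃ r ∈ E.TkSet X (E.rank X p), r.2 ∈ C :=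
    fun hall => h2 ⟨h1, hall⟩
  push_neg at hnall
  exact hnall

/-- Survivors of `X`. -/
def Surv (X : Set α) : Set α := (E.discarded X)ᶜ

lemma surv_iff (X : Set α) (c : α) : c ∈ E.Surv X ↔ ∀ x, (x, c) ∉ E.Rein X := by
  rw [Surv, Set.mem_compl_iff, discarded_eq_rein]
  simp only [Set.mem_setOf_eq, not_exists]

/-- Rank of a surviving argument. -/
noncomputable def rho (X : Set α) (c : α) : ℕ :=
  sSup {n | ∃ x, (x, c) ∈ E.XDef X \ E.Rein X ∧ n = E.rank X (x, c) + 1}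

lemma rho_bddAbove [Fintype α] (X : Set α) (c : α) :
    BddAbove {n | ∃ x, (x, c) ∈ E.XDef X \ E.Rein X ∧ n = E.rank X (x, c) + 1} := by
  apply Set.Finite.bddAbove
  apply Set.Finite.subset (Set.finite_range (fun x => E.rank X (x, c) + 1))
  rintro n ⟨x, _, hn⟩
  exact ⟨x, hn.symm⟩

lemma rho_ge [Fintype α] {X : Set α} {c x : α} (hx : (x, c) ∈ E.XDef X \ E.Rein X) :
    E.rank X (x, c) + 1 ≤ E.rho X c :=
  le_csSup (E.rho_bddAbove X c) ⟨x, hx, rfl⟩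

lemma rho_le [Fintype α] {X : Set α} {c : α} {m : ℕ}
    (hm : ∀ x, (x, c) ∈ E.XDef X \ E.Rein X → E.rank X (x, c) + 1 ≤ m) : E.rho X c ≤ m := by
  by_cases hs : {n | ∃ x, (x, c) ∈ E.XDef X \ E.Rein X ∧ n = E.rank X (x, c) + 1}.Nonempty
  · apply csSup_le hs
    rintro n ⟨x, hx, rfl⟩
    exact hm x hx
  · rw [Set.not_nonempty_iff_eq_empty] at hs
    rw [rho, hs]
    simp

end EAFC

end Dialectical

namespace Dialectical

open Set

variable {α : Type u}

/-! ### Ordered enumeration of a finite set along a rank function -/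

lemma exists_ordered_list [Fintype α] (S : Set α) (key : α → ℕ) :
    ∃ l : List α, l.Nodup ∧ (∀ a, a ∈ l ↔ a ∈ S) ∧
      ∀ (i j : ℕ) (hi : i < l.length) (hj : j < l.length),
        key (l.get ⟨i, hi⟩) < key (l.get ⟨j, hj⟩) → i < j := by
  classical
  set N := (Set.toFinite S).toFinset.sup key + 1 with hN
  set blocks : ℕ → List α :=
    fun k => (Set.toFinite (S ∩ {a | key a = k})).toFinset.toList with hblocks
  have hbl_mem : ∀ k a, a ∈ blocks k ↔ a ∈ S ∧ key a = k := by
    intro k a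
    rw [hblocks]
    rw [Finset.mem_toList, Set.Finite.mem_toFinset]
    exact Iff.rfl
  set l : List α := (List.range N).flatMap blocks with hl
  have hmem : ∀ a, a ∈ l ↔ a ∈ S := by
    intro a
    rw [hl, List.mem_flatMap]
    constructor
    · rintro ⟨k, _, hk⟩
      exact ((hbl_mem k a).1 hk).1
    · intro ha
      refine ⟨key a, List.mem_range.2 ?_, (hbl_mem _ a).2 ⟨ha, rfl⟩⟩
      have : key a ≤ (Set.toFinite S).toFinset.sup key :=
        Finset.le_sup ((Set.Finite.mem_toFinset _).2 ha)
      omega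
  have hpw : l.Pairwise (fun a b => key a ≤ key b ∧ a ≠ b) := by
    rw [hl, List.flatMap, List.pairwise_flatten]
    constructor
    · intro l' hl'
      rw [List.mem_map] at hl'
      obtain ⟨k, _, rfl⟩ := hl'
      refine List.Pairwise.imp_of_mem ?_ (Finset.nodup_toList _)
      intro a b ha hb hne
      have ha' := (hbl_mem k a).1 ha
      have hb' := (hbl_mem k b).1 hb
      exact ⟨by rw [ha'.2, hb'.2], hne⟩
    · rw [List.pairwise_map]
      refine (List.pairwise_lt_range (n := N)).imp ?_
      intro k₁ k₂ hk x hx y hy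
      have hx' := (hbl_mem k₁ x).1 hx
      have hy' := (hbl_mem k₂ y).1 hy
      constructor
      · omega
      · intro hxy
        rw [hxy] at hx'
        omega
  refine ⟨l, ?_, hmem, ?_⟩
  · exact (hpw.imp fun h => h.2)
  · intro i j hi hj hkey
    have hle := List.pairwise_iff_get.1 (hpw.imp fun h => h.1)
    rcases lt_trichotomy i j with h | h | h
    · exact h
    · exfalso
      subst h
      omega
    · exfalso
      have := hle ⟨j, hj⟩ ⟨i, hi⟩ h
      omega
end Dialectical

namespace Dialectical

open Set

variable {α : Type u}

/-! ### The master construction of partially acyclic evaluations -/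

lemma build_paeval [Fintype α] (pd : α → Option (Interp α)) (XX W XF : Set α) (ν : α → ℕ)
    (hWX : W ⊆ XX)
    (hW : ∀ a ∈ W, pdT pd a ⊆ W)
    (hWn : ∀ a ∈ W, pd a ≠ none)
    (hXF : XF ⊆ W)
    (hXFc : ∀ a ∈ XF, pdT pd a ⊆ XF)
    (hnu : ∀ a ∈ W, a ∉ XF → ∀ d ∈ pdT pd a, d ∈ XF ∨ ν d < ν a)
    (b : α) (hb : b ∈ W) :
    ∃ Fs G B, IsPAEvalWith pd XX b Fs G B ∧ Fs ⊆ XF ∧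
      B ⊆ ⋃ a ∈ W, pdF pd a := by
  classical
  set stp : α → α → Prop := fun u v => v ∈ pdT pd u with hstp
  set cl : Set α := {c | Relation.ReflTransGen stp b c} with hcl
  have hbcl : b ∈ cl := Relation.ReflTransGen.refl
  have hclW : cl ⊆ W := by
    intro c hc
    induction hc with
    | refl => exact hb
    | tail h1 h2 ih => exact hW _ ih h2
  have hclosed : ∀ c ∈ cl, pdT pd c ⊆ cl := by
    intro c hc d hd
    exact Relation.ReflTransGen.tail hc hd
  set Fs : Set α := ⋃₀ {F | F ⊆ cl ∩ XF ∧ (∀ a ∈ F, pdT pd a ⊆ F) ∧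
    (∀ a ∈ F, ∃ b' ∈ F, a ∈ pdT pd b')} with hFs
  have hFs_sub : Fs ⊆ cl ∩ XF := by
    rintro a ⟨F, hF, haF⟩
    exact hF.1 haF
  have hFs_closed : ∀ a ∈ Fs, pdT pd a ⊆ Fs := by
    rintro a ⟨F, hF, haF⟩ d hd
    exact ⟨F, hF, hF.2.1 a haF hd⟩
  have hFs_co : ∀ a ∈ Fs, ∃ b' ∈ Fs, a ∈ pdT pd b' := by
    rintro a ⟨F, hF, haF⟩
    obtain ⟨b', hb', hab⟩ := hF.2.2 a haF
    exact ⟨b', ⟨F, hF, hb'⟩, hab⟩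
  have hcycle : ∀ c, c ∈ cl → c ∈ XF → Relation.TransGen stp c c → c ∈ Fs := by
    intro c hccl hcXF hcyc
    set F' : Set α := {a | Relation.ReflTransGen stp c a} with hF'
    have hF'XF : ∀ a ∈ F', a ∈ XF := by
      intro a ha
      induction ha with
      | refl => exact hcXF
      | tail h1 h2 ih => exact hXFc _ ih h2
    refine ⟨F', ⟨?_, ?_, ?_⟩, Relation.ReflTransGen.refl⟩
    · intro a ha
      exact ⟨hccl.trans ha, hF'XF a ha⟩
    · intro a ha d hd
      exact Relation.ReflTransGen.tail ha hd
    · intro a ha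
      rcases (Relation.reflTransGen_iff_eq_or_transGen.1 ha) with rfl | htg
      · obtain ⟨m, hm1, hm2⟩ := Relation.TransGen.tail'_iff.1 hcyc
        exact ⟨m, hm1, hm2⟩
      · obtain ⟨m, hm1, hm2⟩ := Relation.TransGen.tail'_iff.1 htg
        exact ⟨m, hm1, hm2⟩
  have hacyc : ∀ c ∈ cl, c ∉ Fs → ¬Relation.TransGen stp c c := by
    intro c hc hcF hcyc
    by_cases hcXF : c ∈ XF
    · exact hcF (hcycle c hc hcXF hcyc)
    · have claim : ∀ v, Relation.TransGen stp c v → (v ∈ XF ∨ ν v < ν c) := by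
        intro v htg
        induction htg with
        | single h => exact hnu c (hclW hc) hcXF _ h
        | @tail v' v h1 h2 ih =>
          by_cases hv'XF : v' ∈ XF
          · exact Or.inl (hXFc _ hv'XF h2)
          · have hv'cl : v' ∈ cl := hc.trans h1.to_reflTransGen
            rcases hnu v' (hclW hv'cl) hv'XF _ h2 with hXFv | hlt2
            · exact Or.inl hXFv
            · rcases ih with hXFv' | hlt1
              · exact absurd hXFv' hv'XF
              · exact Or.inr (by omega)
      rcases claim c hcyc with hmem | hlt
      · exact hcXF hmem
      · omega
  set nds : α → Set α := fun c => {d | d ∈ cl ∧ d ∉ Fs ∧ Relation.TransGen stp c d} with hnds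
  set σfn : α → ℕ := fun c => (nds c).ncard with hσ
  have hkey : ∀ c ∈ cl, c ∉ Fs → ∀ d, stp c d → d ∉ Fs → σfn d < σfn c := by
    intro c hc hcF d hd hdF
    have hdcl : d ∈ cl := hclosed c hc hd
    apply Set.ncard_lt_ncard _ (Set.toFinite _)
    rw [ssubset_iff_subset_not_subset]
    constructor
    · intro x hx
      exact ⟨hx.1, hx.2.1, Relation.TransGen.head hd hx.2.2⟩
    · intro hsub
      have hdmem : d ∈ nds c := ⟨hdcl, hdF, Relation.TransGen.single hd⟩
      exact hacyc d hdcl hdF (hsub hdmem).2.2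
  by_cases hbFs : b ∈ Fs
  · -- b is in the cyclic part: everything reachable from b is in Fs, take G = []
    have hclFs : cl ⊆ Fs := by
      intro c hc
      induction hc with
      | refl => exact hbFs
      | tail h1 h2 ih => exact hFs_closed _ ih h2
    refine ⟨Fs, [], (⋃ a ∈ Fs, pdF pd a) ∪ ⋃ a ∈ {c : α | c ∈ ([] : List α)}, pdF pd a,
      ⟨?_, List.nodup_nil, hWX hb, ?_, ?_, ?_, ?_, fun _ => hbFs, ?_, ?_, hFs_closed,
        hFs_co, rfl⟩, fun a ha => (hFs_sub ha).2, ?_⟩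
    · intro a ha
      exact absurd ha (List.not_mem_nil)
    · intro a ha
      exact hWX (hXF (hFs_sub ha).2)
    · intro a ha
      exact absurd ha (List.not_mem_nil)
    · intro a ha
      exact hWn a (hXF (hFs_sub ha).2)
    · intro a ha
      exact absurd ha (List.not_mem_nil)
    · intro hne
      exact absurd rfl hne
    · intro i h
      exact absurd h (by simp)
    · intro x hx
      rcases hx with hx | hx
      · obtain ⟨a, ha, hxa⟩ := Set.mem_iUnion₂.1 hx
        exact Set.mem_biUnion (hXF (hFs_sub ha).2) hxa
      · obtain ⟨a, ha, hxa⟩ := Set.mem_iUnion₂.1 hx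
        exact absurd ha (List.not_mem_nil)
  · -- b is on the acyclic part
    obtain ⟨l, hlnd, hlmem, hlord⟩ := exists_ordered_list {x | x ∈ cl ∧ x ∉ Fs ∧ x ≠ b} σfn
    set G : List α := l ++ [b] with hG
    have hbl : b ∉ l := fun hmem => ((hlmem b).1 hmem).2.2 rfl
    have hlcl : ∀ a ∈ l, a ∈ cl ∧ a ∉ Fs ∧ a ≠ b := fun a ha => (hlmem a).1 ha
    have hGmem : ∀ a ∈ G, a ∈ cl := by
      intro a ha
      rcases List.mem_append.1 ha with h | h
      · exact (hlcl a h).1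
      · rw [List.mem_singleton.1 h]; exact hbcl
    have hGF : ∀ a ∈ G, a ∉ Fs := by
      intro a ha
      rcases List.mem_append.1 ha with h | h
      · exact (hlcl a h).2.1
      · rw [List.mem_singleton.1 h]; exact hbFs
    have hnodup : G.Nodup := by
      refine List.Nodup.append hlnd (List.nodup_singleton b) ?_
      intro a ha hb'
      rw [List.mem_singleton] at hb'
      subst hb'
      exact hbl ha
    have hlen : G.length = l.length + 1 := by simp [hG]
    have hnotneed_b : ∀ c ∈ cl, ¬ stp c b := by
      intro c hc hstpb
      apply hacyc b hbcl hbFs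
      exact Relation.TransGen.tail' hc hstpb
    refine ⟨Fs, G, (⋃ a ∈ Fs, pdF pd a) ∪ ⋃ a ∈ {c : α | c ∈ G}, pdF pd a,
      ⟨hGF, hnodup, hWX hb, ?_, ?_, ?_, ?_, ?_, ?_, ?_, hFs_closed, hFs_co, rfl⟩,
      fun a ha => (hFs_sub ha).2, ?_⟩
    · intro a ha
      exact hWX (hXF (hFs_sub ha).2)
    · intro a ha
      exact hWX (hclW (hGmem a ha))
    · intro a ha
      exact hWn a (hXF (hFs_sub ha).2)
    · intro a ha
      exact hWn a (hclW (hGmem a ha))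
    · intro hnil
      exact absurd hnil (by simp [hG])
    · intro _
      rw [hG]
      exact List.getLast?_concat
    · -- the ordering condition
      intro i hi d hd
      by_cases hdF : d ∈ Fs
      · exact Or.inl hdF
      right
      set c := G.get ⟨i, hi⟩ with hc
      have hcG : c ∈ G := List.get_mem G _
      have hccl : c ∈ cl := hGmem c hcG
      have hcF : c ∉ Fs := hGF c hcG
      have hdcl : d ∈ cl := hclosed c hccl hd
      have hdb : d ≠ b := by
        intro hdb
        rw [hdb] at hd
        exact hnotneed_b c hccl hd
      have hdl : d ∈ l := (hlmem d).2 ⟨hdcl, hdF, hdb⟩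
      obtain ⟨jf, hjval⟩ := List.mem_iff_get.1 hdl
      have hjG : (jf : ℕ) < G.length := by
        have := jf.isLt
        omega
      have hgetj : G.get ⟨(jf : ℕ), hjG⟩ = d := by
        have h1 : G.get ⟨(jf : ℕ), hjG⟩ = l.get jf := by
          show (l ++ [b]).get ⟨(jf : ℕ), hjG⟩ = l.get jf
          rw [List.get_eq_getElem, List.get_eq_getElem]
          exact List.getElem_append_left jf.isLt
        rw [h1, hjval]
      by_cases hil : i < l.length
      · -- c comes from l
        have hcl' : c = l.get ⟨i, hil⟩ := by
          show (l ++ [b]).get ⟨i, hi⟩ = l.get ⟨i, hil⟩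
          rw [List.get_eq_getElem, List.get_eq_getElem]
          exact List.getElem_append_left hil
        have hσlt : σfn d < σfn c := hkey c hccl hcF d hd hdF
        have : (jf : ℕ) < i := by
          apply hlord (jf : ℕ) i jf.isLt hil
          rw [hjval, ← hcl']
          exact hσlt
        exact ⟨(jf : ℕ), hjG, this, hgetj⟩
      · -- c = b, the last element
        have hieq : i = l.length := by omega
        have : (jf : ℕ) < i := by
          have := jf.isLt
          omega
        exact ⟨(jf : ℕ), hjG, this, hgetj⟩
    · intro x hx
      rcases hx with hx | hx
      · obtain ⟨a, ha, hxa⟩ := Set.mem_iUnion₂.1 hx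
        exact Set.mem_biUnion (hXF (hFs_sub ha).2) hxa
      · obtain ⟨a, ha, hxa⟩ := Set.mem_iUnion₂.1 hx
        exact Set.mem_biUnion (hclW (hGmem a ha)) hxa
end Dialectical

namespace Dialectical

open Set

variable {α : Type u}

namespace EAFC

variable (E : EAFC α)

lemma X_subset_surv {X : Set α} (hcf : E.ConflictFree X) : X ⊆ E.Surv X := by
  intro a ha hd
  obtain ⟨c, hc, hdef, _⟩ := hd
  exact hcf ⟨c, hc, a, ha, hdef⟩

lemma not_defeats_choice {X : Set α} {a x : α} (hR : E.R x a) (hnd : ¬E.Defeats X x a) :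
    ∃ C ⊆ X, E.D C x a := by
  rw [Defeats, not_and] at hnd
  have := hnd hR
  push_neg at this
  exact this
  
/-- The survivor pd-function for a conflict-free set `X`. -/
lemma exists_pd_surv [Fintype α] (hsc : E.StronglyConsistent) {X : Set α}
    (hcf : E.ConflictFree X) :
    ∃ pd : α → Option (Interp α),
      (∀ a v, pd a = some v → E.toADF.MinDecIn v a) ∧
      (∀ a, pd a ≠ none) ∧
      (∀ a ∈ X, pdT pd a ⊆ X) ∧
      (∀ a ∈ E.Surv X, pdF pd a ∩ X = ∅) ∧
      (∀ a ∈ E.Surv X, pdT pd a ⊆ E.Surv X) ∧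
      (∀ a ∈ E.Surv X, ∀ d ∈ pdT pd a, d ∈ X ∨ E.rho X d < E.rho X a) := by
  classical
  -- choice of defense sets inside X for non-defeats
  have hnd : ∀ a x, ∃ C, (E.R x a ∧ ¬E.Defeats X x a) → E.D C x a ∧ C ⊆ X := by
    intro a x
    by_cases hh : E.R x a ∧ ¬E.Defeats X x a
    · obtain ⟨C, hCX, hCD⟩ := E.not_defeats_choice hh.1 hh.2
      exact ⟨C, fun _ => ⟨hCD, hCX⟩⟩
    · exact ⟨∅, fun h' => absurd h' hh⟩
  choose CX hCX using hnd
  -- choice of unreinstated defense sets for defeats on survivors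
  have hrd : ∀ a x, ∃ C, (a ∈ E.Surv X ∧ x ∈ X ∧ E.Defeats X x a) →
      E.D C x a ∧ ∀ y ∈ C, y ∈ E.Surv X ∧ E.rho X y ≤ E.rank X (x, a) := by
    intro a x
    by_cases hh : a ∈ E.Surv X ∧ x ∈ X ∧ E.Defeats X x a
    · have hp0 : (x, a) ∈ E.XDef X := ⟨hh.2.1, hh.2.2⟩
      have hp : (x, a) ∉ E.Rein X := (E.surv_iff X a).1 hh.1 x
      obtain ⟨C, hCD, hCnot⟩ := E.exists_unreinstated_defense hp0 hp
      refine ⟨C, fun _ => ⟨hCD, fun y hy => ⟨?_, ?_⟩⟩⟩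
      · rw [E.surv_iff X y]
        intro x' hx'
        exact hCnot (x', y) (E.rein_subset_TkSet X _ hx') hy
      · apply E.rho_le
        intro x' hx'
        have hnotT : (x', y) ∉ E.TkSet X (E.rank X (x, a)) :=
          fun hmem => hCnot (x', y) hmem hy
        have := E.rank_lt_of_not_mem hx'.1 hnotT
        omega
    · exact ⟨∅, fun h' => absurd h' hh⟩
  choose CR hCR using hrd
  set T : α → Set α := fun a => if a ∈ E.Surv X then
      (⋃ x ∈ {x | E.R x a ∧ x ∈ X ∧ ¬E.Defeats X x a}, CX a x) ∪
      (⋃ x ∈ {x | E.R x a ∧ x ∈ X ∧ E.Defeats X x a}, CR a x)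
    else ∅ with hT
  set F : α → Set α := fun a => if a ∈ E.Surv X then {x | E.R x a ∧ x ∉ X}
    else {x | E.R x a} with hF
  have hTdef : ∀ a, ∀ y ∈ T a, ∃ x C, E.D C x a ∧ y ∈ C := by
    intro a y hy
    simp only [hT] at hy
    by_cases ha : a ∈ E.Surv X
    · rw [if_pos ha] at hy
      rcases hy with hy | hy
      · obtain ⟨x, hx, hyx⟩ := Set.mem_iUnion₂.1 hy
        exact ⟨x, CX a x, (hCX a x ⟨hx.1, hx.2.2⟩).1, hyx⟩
      · obtain ⟨x, hx, hyx⟩ := Set.mem_iUnion₂.1 hy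
        exact ⟨x, CR a x, (hCR a x ⟨ha, hx.2.1, hx.2.2⟩).1, hyx⟩
    · rw [if_neg ha] at hy
      exact absurd hy (Set.notMem_empty y)
  have hdec : ∀ a, E.toADF.DecisivelyIn (mkInterp (T a) (F a)) a := by
    intro a
    apply E.decIn_mk_of_cover hsc
    · intro y hy
      obtain ⟨x, C, hCD, hyC⟩ := hTdef a y hy
      exact E.sc_not_attack hsc hCD hyC
    · intro x hx
      simp only [hF] at hx
      by_cases ha : a ∈ E.Surv X
      · rw [if_pos ha] at hx; exact hx.1
      · rw [if_neg ha] at hx; exact hx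
    · intro x hR
      by_cases ha : a ∈ E.Surv X
      · by_cases hxX : x ∈ X
        · right
          by_cases hdef : E.Defeats X x a
          · refine ⟨CR a x, ?_, (hCR a x ⟨ha, hxX, hdef⟩).1⟩
            intro y hy
            simp only [hT, if_pos ha]
            right
            exact Set.mem_biUnion (show x ∈ {x | E.R x a ∧ x ∈ X ∧ E.Defeats X x a}
              from ⟨hR, hxX, hdef⟩) hy
          · refine ⟨CX a x, ?_, (hCX a x ⟨hR, hdef⟩).1⟩
            intro y hy
            simp only [hT, if_pos ha]
            left
            exact Set.mem_biUnion (show x ∈ {x | E.R x a ∧ x ∈ X ∧ ¬E.Defeats X x a}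
              from ⟨hR, hxX, hdef⟩) hy
        · left
          simp only [hF, if_pos ha]
          exact ⟨hR, hxX⟩
      · left
        simp only [hF, if_neg ha]
        exact hR
  obtain ⟨pd, hpd1, hpd2, hpd3, hpd4⟩ := exists_pd_of_choices E.toADF T F hdec
  refine ⟨pd, hpd1, hpd2, ?_, ?_, ?_, ?_⟩
  · -- a ∈ X : pdT ⊆ X
    intro a ha y hy
    have hy' := hpd3 a hy
    simp only [hT, if_pos (E.X_subset_surv hcf ha)] at hy'
    rcases hy' with hy' | hy'
    · obtain ⟨x, hx, hyx⟩ := Set.mem_iUnion₂.1 hy'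
      exact (hCX a x ⟨hx.1, hx.2.2⟩).2 hyx
    · obtain ⟨x, hx, hyx⟩ := Set.mem_iUnion₂.1 hy'
      exact absurd hx.2.2 (fun hdef => hcf ⟨x, hx.2.1, a, ha, hdef⟩)
  · -- fset avoids X on survivors
    intro a ha
    ext y
    simp only [Set.mem_inter_iff, Set.mem_empty_iff_false, iff_false, not_and]
    intro hy hyX
    have hy' := hpd4 a hy
    simp only [hF, if_pos ha] at hy'
    exact hy'.2 hyX
  · -- pdT of survivors lands in survivors
    intro a ha y hy
    have hy' := hpd3 a hy
    simp only [hT, if_pos ha] at hy'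
    rcases hy' with hy' | hy'
    · obtain ⟨x, hx, hyx⟩ := Set.mem_iUnion₂.1 hy'
      exact E.X_subset_surv hcf ((hCX a x ⟨hx.1, hx.2.2⟩).2 hyx)
    · obtain ⟨x, hx, hyx⟩ := Set.mem_iUnion₂.1 hy'
      exact ((hCR a x ⟨ha, hx.2.1, hx.2.2⟩).2 y hyx).1
  · -- rank decrease outside X
    intro a ha d hd
    have hy' := hpd3 a hd
    simp only [hT, if_pos ha] at hy'
    rcases hy' with hy' | hy'
    · obtain ⟨x, hx, hyx⟩ := Set.mem_iUnion₂.1 hy'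
      exact Or.inl ((hCX a x ⟨hx.1, hx.2.2⟩).2 hyx)
    · obtain ⟨x, hx, hyx⟩ := Set.mem_iUnion₂.1 hy'
      right
      have h1 := ((hCR a x ⟨ha, hx.2.1, hx.2.2⟩).2 d hyx).2
      have h2 : E.rank X (x, a) + 1 ≤ E.rho X a :=
        E.rho_ge ⟨⟨hx.2.1, hx.2.2⟩, (E.surv_iff X a).1 ha x⟩
      omega

/-- Every survivor of a conflict-free set has a partially acyclic evaluation avoiding `X`. -/
lemma surv_eval [Fintype α] (hsc : E.StronglyConsistent) {X : Set α}
    (hcf : E.ConflictFree X) {b : α} (hb : b ∈ E.Surv X) :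
    ∃ Fs G B, E.toADF.PAEval Set.univ b Fs G B ∧ Fs ⊆ X ∧ B ∩ X = ∅ := by
  obtain ⟨pd, hp1, hp2, hp3, hp4, hp5, hp6⟩ := E.exists_pd_surv hsc hcf
  obtain ⟨Fs, G, B, hev, hFsX, hB⟩ := build_paeval pd Set.univ (E.Surv X) X (E.rho X)
    (Set.subset_univ _) hp5 (fun a _ => hp2 a) (E.X_subset_surv hcf)
    (fun a ha => hp3 a ha) (fun a ha _ d hd => hp6 a ha d hd) b hb
  refine ⟨Fs, G, B, ⟨pd, maxSound_univ E.toADF pd hp1 hp2, hev⟩, hFsX, ?_⟩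
  ext y
  simp only [Set.mem_inter_iff, Set.mem_empty_iff_false, iff_false, not_and]
  intro hyB hyX
  obtain ⟨a, ha, hya⟩ := Set.mem_iUnion₂.1 (hB hyB)
  exact (Set.eq_empty_iff_forall_notMem.1 (hp4 a ha) y) ⟨hya, hyX⟩

lemma pD_eq_discarded [Fintype α] (hsc : E.StronglyConsistent) {X : Set α}
    (hcf : E.ConflictFree X) : E.toADF.pDiscarded X = E.discarded X := by
  ext b
  constructor
  · intro hb
    by_contra hd
    obtain ⟨Fs, G, B, hev, hFsX, hB⟩ := E.surv_eval hsc hcf hd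
    exact hb ⟨Fs, G, B, hev, hFsX, hB⟩
  · exact fun hb => E.discarded_subset_pD hsc hcf hb

lemma decIn_pRange_iff [Fintype α] (hsc : E.StronglyConsistent) {X : Set α}
    (hcf : E.ConflictFree X) (e : α) :
    E.toADF.DecisivelyIn (E.toADF.pRange X) e ↔ E.Defends X e := by
  have hTF : X ∩ (E.toADF.pDiscarded X \ X) = ∅ := Set.inter_diff_self _ _
  rw [ADF.pRange, decIn_mk_iff _ _ _ _ hTF]
  constructor
  · intro hdec x hdef
    by_contra hxd
    have hxpd : x ∉ E.toADF.pDiscarded X := by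
      rw [E.pD_eq_discarded hsc hcf]
      exact hxd
    have hC := hdec (insert x (X ∩ E.toADF.par e))
      (fun y hy => Set.mem_insert_of_mem _ hy)
      (by
        intro y hy
        rcases Set.mem_insert_iff.1 hy with rfl | hy
        · exact E.mem_par_attack hdef.1
        · exact hy.2)
      (by
        ext y
        simp only [Set.mem_inter_iff, Set.mem_empty_iff_false, iff_false, not_and]
        intro hy hy2
        rcases Set.mem_insert_iff.1 hy with rfl | hy
        · exact hxpd hy2.1
        · exact hy2.2 hy.1)
    obtain ⟨C, hCsub, hCD⟩ := (E.C_true_iff e _).1 hC x (Set.mem_insert _ _) hdef.1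
    apply hdef.2
    refine ⟨C, fun y hy => ?_, hCD⟩
    rcases Set.mem_insert_iff.1 (hCsub hy) with rfl | hy'
    · exact absurd hdef.1 (E.sc_not_attack hsc hCD hy)
    · exact hy'.1
  · intro hdefs S h1 h2 h3
    rw [C_true_iff]
    intro x hxS hR
    by_cases hdef : E.Defeats X x e
    · exfalso
      have hxd := hdefs x hdef
      have hxX : x ∈ X := by
        by_contra hxX
        have : x ∈ E.toADF.pDiscarded X \ X := ⟨by rw [E.pD_eq_discarded hsc hcf]; exact hxd, hxX⟩
        exact (Set.eq_empty_iff_forall_notMem.1 h3 x) ⟨hxS, this⟩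
      obtain ⟨c, hcX, hcdef, _⟩ := hxd
      exact hcf ⟨c, hcX, x, hxX, hcdef⟩
    · obtain ⟨C, hCX, hCD⟩ := E.not_defeats_choice hR hdef
      exact ⟨C, fun y hy => h1 ⟨hCX hy, E.mem_par_def hCD hy⟩, hCD⟩

lemma admissible_iff [Fintype α] (hsc : E.StronglyConsistent) (X : Set α) :
    E.Admissible X ↔ E.toADF.CA2Admissible X := by
  constructor
  · rintro ⟨hcf, hdef⟩
    exact ⟨(E.cf_iff X).1 hcf, fun e he => (E.decIn_pRange_iff hsc hcf e).2 (hdef e he)⟩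
  · rintro ⟨hcf', hdec⟩
    have hcf := (E.cf_iff X).2 hcf'
    exact ⟨hcf, fun e he => (E.decIn_pRange_iff hsc hcf e).1 (hdec e he)⟩

lemma complete_iff [Fintype α] (hsc : E.StronglyConsistent) (X : Set α) :
    E.Complete X ↔ E.toADF.CA2Complete X := by
  constructor
  · rintro ⟨hadm, hcomp⟩
    refine ⟨(E.admissible_iff hsc X).1 hadm, fun e he => ?_⟩
    exact hcomp e ((E.decIn_pRange_iff hsc hadm.1 e).1 he)
  · rintro ⟨hadm, hcomp⟩
    have hadm' := (E.admissible_iff hsc X).2 hadm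
    refine ⟨hadm', fun e he => ?_⟩
    exact hcomp e ((E.decIn_pRange_iff hsc hadm'.1 e).2 he)

lemma preferred_iff [Fintype α] (hsc : E.StronglyConsistent) (X : Set α) :
    E.Preferred X ↔ E.toADF.CA2Preferred X := by
  constructor
  · rintro ⟨hadm, hmax⟩
    exact ⟨(E.admissible_iff hsc X).1 hadm,
      fun Y hY hXY => hmax Y ((E.admissible_iff hsc Y).2 hY) hXY⟩
  · rintro ⟨hadm, hmax⟩
    exact ⟨(E.admissible_iff hsc X).2 hadm,
      fun Y hY hXY => hmax Y ((E.admissible_iff hsc Y).1 hY) hXY⟩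

end EAFC

end Dialectical

namespace Dialectical

open Set

variable {α : Type u}

namespace EAFC

variable (E : EAFC α)

/-! ### The grounded extension: iteration of the characteristic function -/

lemma defeats_anti {X Y : Set α} (hXY : X ⊆ Y) {a b : α} (h : E.Defeats Y a b) :
    E.Defeats X a b :=
  ⟨h.1, fun ⟨C, hCX, hCD⟩ => h.2 ⟨C, hCX.trans hXY, hCD⟩⟩

lemma discarded_mono {X Y : Set α} (hXY : X ⊆ Y) (hYd : Y ∩ E.discarded X = ∅) :
    E.discarded X ⊆ E.discarded Y := by
  rintro b ⟨a, haX, hdef, RS, hfin, hmem, habRS, hclose⟩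
  have key : ∀ p ∈ RS, E.Defeats Y p.1 p.2 := by
    intro p hp
    refine ⟨(hmem p hp).2.1, ?_⟩
    rintro ⟨C, hCY, hCD⟩
    obtain ⟨q, hq, hqC⟩ := hclose p hp C hCD
    have hqd : q.2 ∈ E.discarded X := by
      refine ⟨q.1, (hmem q hq).1, (hmem q hq).2, RS, hfin, hmem, ?_, hclose⟩
      show (q.1, q.2) ∈ RS
      rwa [Prod.mk.eta]
    exact (Set.eq_empty_iff_forall_notMem.1 hYd q.2) ⟨hCY hqC, hqd⟩
  exact ⟨a, hXY haX, key (a, b) habRS, RS, hfin,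
    fun p hp => ⟨hXY (hmem p hp).1, key p hp⟩, habRS, hclose⟩

lemma defends_mono {X Y : Set α} (hXY : X ⊆ Y) (hYd : Y ∩ E.discarded X = ∅) {a : α}
    (h : E.Defends X a) : E.Defends Y a := by
  intro b hdefY
  exact E.discarded_mono hXY hYd (h b (E.defeats_anti hXY hdefY))

lemma cf_empty : E.ConflictFree (∅ : Set α) := by
  rintro ⟨a, ha, _⟩
  exact ha

lemma charFun_inter_discarded {Z : Set α} (hcf : E.ConflictFree Z) :
    E.charFun Z ∩ E.discarded Z = ∅ := by
  ext a
  simp only [Set.mem_inter_iff, Set.mem_empty_iff_false, iff_false, not_and]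
  rintro hdefends ⟨c, hcZ, hcdef, _⟩
  obtain ⟨c', hc'Z, hdef', _⟩ := hdefends c hcdef
  exact hcf ⟨c', hc'Z, c, hcZ, hdef'⟩

lemma cf_charFun {Z : Set α} (hcf : E.ConflictFree Z) (hZF : Z ⊆ E.charFun Z) :
    E.ConflictFree (E.charFun Z) := by
  rintro ⟨a, ha, b, hb, hdef⟩
  have hdefZ : E.Defeats Z a b := E.defeats_anti hZF hdef
  have had : a ∈ E.discarded Z := hb a hdefZ
  exact (Set.eq_empty_iff_forall_notMem.1 (E.charFun_inter_discarded hcf) a) ⟨ha, had⟩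

lemma iter_props : ∀ i, E.ConflictFree (E.charFun^[i] ∅) ∧
    E.charFun^[i] ∅ ⊆ E.charFun^[i + 1] ∅ := by
  intro i
  induction i with
  | zero =>
    simp only [Function.iterate_zero, id_eq]
    exact ⟨E.cf_empty, Set.empty_subset _⟩
  | succ i ih =>
    have e1 : E.charFun^[i + 1] ∅ = E.charFun (E.charFun^[i] ∅) :=
      Function.iterate_succ_apply' E.charFun i ∅
    have e2 : E.charFun^[i + 2] ∅ = E.charFun (E.charFun^[i + 1] ∅) :=
      Function.iterate_succ_apply' E.charFun (i + 1) ∅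
    have hsub : E.charFun^[i] ∅ ⊆ E.charFun (E.charFun^[i] ∅) := by
      rw [← e1]; exact ih.2
    constructor
    · rw [e1]
      exact E.cf_charFun ih.1 hsub
    · intro a ha
      rw [e2, e1]
      rw [e1] at ha
      exact E.defends_mono hsub (E.charFun_inter_discarded ih.1) ha

lemma iter_mono {i j : ℕ} (hij : i ≤ j) : E.charFun^[i] ∅ ⊆ E.charFun^[j] ∅ := by
  induction j with
  | zero =>
    have : i = 0 := by omega
    rw [this]
  | succ j ih =>
    rcases Nat.lt_or_ge i (j + 1) with h | h
    · exact (ih (by omega)).trans (E.iter_props j).2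
    · have : i = j + 1 := by omega
      rw [this]

lemma iter_const {N : ℕ} (hN : E.charFun^[N] ∅ = E.charFun^[N + 1] ∅) :
    ∀ k, E.charFun^[N + k] ∅ = E.charFun^[N] ∅ := by
  intro k
  induction k with
  | zero => rfl
  | succ k ih =>
    have h1 : N + (k + 1) = (N + k) + 1 := by omega
    rw [h1, Function.iterate_succ_apply' E.charFun (N + k) ∅, ih,
      ← Function.iterate_succ_apply' E.charFun N ∅, ← hN]

lemma exists_fix [Fintype α] : ∃ N, E.charFun^[N] ∅ = E.charFun^[N + 1] ∅ ∧
    E.grounded = E.charFun^[N] ∅ := by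
  have hfix : ∃ N, E.charFun^[N] ∅ = E.charFun^[N + 1] ∅ := by
    by_contra hc
    push_neg at hc
    have key : ∀ i, i ≤ (E.charFun^[i] ∅).ncard := by
      intro i
      induction i with
      | zero => omega
      | succ i ih =>
        have hlt : (E.charFun^[i] ∅).ncard < (E.charFun^[i + 1] ∅).ncard :=
          Set.ncard_lt_ncard (ssubset_of_subset_of_ne (E.iter_props i).2 (hc i))
            (Set.toFinite _)
        omega
    have h1 := key (Fintype.card α + 1)
    have h2 : (E.charFun^[Fintype.card α + 1] ∅).ncard ≤ Fintype.card α := by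
      have := Set.ncard_le_ncard (Set.subset_univ (E.charFun^[Fintype.card α + 1] ∅))
        (Set.toFinite _)
      rwa [Set.ncard_univ, Nat.card_eq_fintype_card] at this
    omega
  obtain ⟨N, hN⟩ := hfix
  refine ⟨N, hN, ?_⟩
  apply Set.Subset.antisymm
  · apply Set.iUnion_subset
    intro i
    rcases Nat.lt_or_ge i N with h | h
    · exact E.iter_mono (le_of_lt h)
    · have h1 : i = N + (i - N) := by omega
      rw [h1, E.iter_const hN (i - N)]
  · exact Set.subset_iUnion (fun i => E.charFun^[i] ∅) N

lemma grounded_cf [Fintype α] : E.ConflictFree E.grounded := by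
  obtain ⟨N, hN, hgr⟩ := E.exists_fix
  rw [hgr]
  exact (E.iter_props N).1

lemma grounded_fix [Fintype α] : E.charFun E.grounded = E.grounded := by
  obtain ⟨N, hN, hgr⟩ := E.exists_fix
  rw [hgr, ← Function.iterate_succ_apply' E.charFun N ∅, ← hN]

lemma grounded_complete [Fintype α] : E.Complete E.grounded := by
  refine ⟨⟨E.grounded_cf, fun a ha => ?_⟩, fun a ha => ?_⟩
  · rw [← E.grounded_fix] at ha
    exact ha
  · rw [← E.grounded_fix]
    exact ha

/-! ### Stages -/

/-- The first iteration stage containing an argument. -/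
noncomputable def stage (a : α) : ℕ := sInf {i | a ∈ E.charFun^[i] ∅}

lemma stage_mem {a : α} (ha : a ∈ E.grounded) : a ∈ E.charFun^[E.stage a] ∅ := by
  have hne : {i | a ∈ E.charFun^[i] ∅}.Nonempty := by
    obtain ⟨i, hi⟩ := Set.mem_iUnion.1 ha
    exact ⟨i, hi⟩
  exact Nat.sInf_mem hne

lemma stage_pos {a : α} (ha : a ∈ E.grounded) : 1 ≤ E.stage a := by
  by_contra hc
  have h0 : E.stage a = 0 := by omega
  have := E.stage_mem ha
  rw [h0] at this
  simp only [Function.iterate_zero, id_eq] at this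
  exact this

lemma stage_le {a : α} {i : ℕ} (hi : a ∈ E.charFun^[i] ∅) : E.stage a ≤ i :=
  Nat.sInf_le hi

lemma stage_le_N [Fintype α] {a : α} {N : ℕ} (hgr : E.grounded = E.charFun^[N] ∅)
    (ha : a ∈ E.grounded) : E.stage a ≤ N := by
  rw [hgr] at ha
  exact E.stage_le ha

lemma grounded_defends {a : α} (ha : a ∈ E.grounded) :
    E.Defends (E.charFun^[E.stage a - 1] ∅) a := by
  have h1 := E.stage_mem ha
  have h2 := E.stage_pos ha
  have : E.stage a = (E.stage a - 1) + 1 := by omega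
  rw [this, Function.iterate_succ_apply'] at h1
  exact h1

lemma iter_subset_grounded (i : ℕ) : E.charFun^[i] ∅ ⊆ E.grounded :=
  Set.subset_iUnion (fun i => E.charFun^[i] ∅) i

lemma disc_iter_step (i : ℕ) :
    E.discarded (E.charFun^[i] ∅) ⊆ E.discarded (E.charFun^[i + 1] ∅) := by
  apply E.discarded_mono (E.iter_props i).2
  rw [Function.iterate_succ_apply']
  exact E.charFun_inter_discarded (E.iter_props i).1

lemma disc_iter_le {i j : ℕ} (hij : i ≤ j) :
    E.discarded (E.charFun^[i] ∅) ⊆ E.discarded (E.charFun^[j] ∅) := by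
  induction j with
  | zero =>
    have : i = 0 := by omega
    rw [this]
  | succ j ih =>
    rcases Nat.lt_or_ge i (j + 1) with h | h
    · exact (ih (by omega)).trans (E.disc_iter_step j)
    · have : i = j + 1 := by omega
      rw [this]

lemma disc_iter_subset [Fintype α] {a : α} (ha : a ∈ E.grounded) :
    E.discarded (E.charFun^[E.stage a - 1] ∅) ⊆ E.discarded E.grounded := by
  obtain ⟨N, hN, hgr⟩ := E.exists_fix
  rw [hgr]
  exact E.disc_iter_le (by
    have := E.stage_le_N hgr ha
    omega)

lemma grounded_inter_discarded [Fintype α] : E.grounded ∩ E.discarded E.grounded = ∅ := by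
  have := E.charFun_inter_discarded E.grounded_cf
  rwa [E.grounded_fix] at this

end EAFC

end Dialectical

namespace Dialectical

open Set

variable {α : Type u}

namespace EAFC

variable (E : EAFC α)

/-! ### Graded pd-function for the grounded extension -/

lemma exists_pd_gnd [Fintype α] (hsc : E.StronglyConsistent) :
    ∃ pd : α → Option (Interp α),
      (∀ a v, pd a = some v → E.toADF.MinDecIn v a) ∧
      (∀ a, pd a ≠ none) ∧
      (∀ a ∈ E.grounded, pdT pd a ⊆ E.charFun^[E.stage a - 1] ∅) ∧
      (∀ a ∈ E.Surv E.grounded, pdF pd a ∩ E.grounded = ∅) ∧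
      (∀ a ∈ E.Surv E.grounded, pdT pd a ⊆ E.Surv E.grounded) ∧
      (∀ a ∈ E.Surv E.grounded, a ∉ E.grounded → ∀ d ∈ pdT pd a,
        d ∈ E.grounded ∨ E.rho E.grounded d < E.rho E.grounded a) := by
  classical
  set Gd := E.grounded with hGd
  have hcf : E.ConflictFree Gd := E.grounded_cf
  have hGdS : Gd ⊆ E.Surv Gd := E.X_subset_surv hcf
  -- defense choices inside the previous stage, for grounded arguments
  have hzd : ∀ a x, ∃ C, (E.R x a ∧ ¬E.Defeats (E.charFun^[E.stage a - 1] ∅) x a) →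
      E.D C x a ∧ C ⊆ E.charFun^[E.stage a - 1] ∅ := by
    intro a x
    by_cases hh : E.R x a ∧ ¬E.Defeats (E.charFun^[E.stage a - 1] ∅) x a
    · obtain ⟨C, hCX, hCD⟩ := E.not_defeats_choice hh.1 hh.2
      exact ⟨C, fun _ => ⟨hCD, hCX⟩⟩
    · exact ⟨∅, fun h' => absurd h' hh⟩
  choose CZ hCZ using hzd
  -- defense choices inside Gd for non-defeats
  have hnd : ∀ a x, ∃ C, (E.R x a ∧ ¬E.Defeats Gd x a) → E.D C x a ∧ C ⊆ Gd := by
    intro a x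
    by_cases hh : E.R x a ∧ ¬E.Defeats Gd x a
    · obtain ⟨C, hCX, hCD⟩ := E.not_defeats_choice hh.1 hh.2
      exact ⟨C, fun _ => ⟨hCD, hCX⟩⟩
    · exact ⟨∅, fun h' => absurd h' hh⟩
  choose CX hCX using hnd
  -- unreinstated defense choices for defeats on survivors
  have hrd : ∀ a x, ∃ C, (a ∈ E.Surv Gd ∧ x ∈ Gd ∧ E.Defeats Gd x a) →
      E.D C x a ∧ ∀ y ∈ C, y ∈ E.Surv Gd ∧ E.rho Gd y ≤ E.rank Gd (x, a) := by
    intro a x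
    by_cases hh : a ∈ E.Surv Gd ∧ x ∈ Gd ∧ E.Defeats Gd x a
    · have hp0 : (x, a) ∈ E.XDef Gd := ⟨hh.2.1, hh.2.2⟩
      have hp : (x, a) ∉ E.Rein Gd := (E.surv_iff Gd a).1 hh.1 x
      obtain ⟨C, hCD, hCnot⟩ := E.exists_unreinstated_defense hp0 hp
      refine ⟨C, fun _ => ⟨hCD, fun y hy => ⟨?_, ?_⟩⟩⟩
      · rw [E.surv_iff Gd y]
        intro x' hx'
        exact hCnot (x', y) (E.rein_subset_TkSet Gd _ hx') hy
      · apply E.rho_le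
        intro x' hx'
        have hnotT : (x', y) ∉ E.TkSet Gd (E.rank Gd (x, a)) :=
          fun hmem => hCnot (x', y) hmem hy
        have := E.rank_lt_of_not_mem hx'.1 hnotT
        omega
    · exact ⟨∅, fun h' => absurd h' hh⟩
  choose CR hCR using hrd
  set T : α → Set α := fun a =>
    if a ∈ Gd then ⋃ x ∈ {x | E.R x a ∧ ¬E.Defeats (E.charFun^[E.stage a - 1] ∅) x a}, CZ a x
    else if a ∈ E.Surv Gd then
      (⋃ x ∈ {x | E.R x a ∧ x ∈ Gd ∧ ¬E.Defeats Gd x a}, CX a x) ∪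
      (⋃ x ∈ {x | E.R x a ∧ x ∈ Gd ∧ E.Defeats Gd x a}, CR a x)
    else ∅ with hT
  set F : α → Set α := fun a =>
    if a ∈ Gd then {x | E.R x a ∧ E.Defeats (E.charFun^[E.stage a - 1] ∅) x a}
    else if a ∈ E.Surv Gd then {x | E.R x a ∧ x ∉ Gd}
    else {x | E.R x a} with hF
  have hTdef : ∀ a, ∀ y ∈ T a, ∃ x C, E.D C x a ∧ y ∈ C := by
    intro a y hy
    simp only [hT] at hy
    by_cases ha : a ∈ Gd
    · rw [if_pos ha] at hy
      obtain ⟨x, hx, hyx⟩ := Set.mem_iUnion₂.1 hy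
      exact ⟨x, CZ a x, (hCZ a x ⟨hx.1, hx.2⟩).1, hyx⟩
    · rw [if_neg ha] at hy
      by_cases ha' : a ∈ E.Surv Gd
      · rw [if_pos ha'] at hy
        rcases hy with hy | hy
        · obtain ⟨x, hx, hyx⟩ := Set.mem_iUnion₂.1 hy
          exact ⟨x, CX a x, (hCX a x ⟨hx.1, hx.2.2⟩).1, hyx⟩
        · obtain ⟨x, hx, hyx⟩ := Set.mem_iUnion₂.1 hy
          exact ⟨x, CR a x, (hCR a x ⟨ha', hx.2.1, hx.2.2⟩).1, hyx⟩
      · rw [if_neg ha'] at hy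
        exact absurd hy (Set.notMem_empty y)
  have hdec : ∀ a, E.toADF.DecisivelyIn (mkInterp (T a) (F a)) a := by
    intro a
    apply E.decIn_mk_of_cover hsc
    · intro y hy
      obtain ⟨x, C, hCD, hyC⟩ := hTdef a y hy
      exact E.sc_not_attack hsc hCD hyC
    · intro x hx
      simp only [hF] at hx
      by_cases ha : a ∈ Gd
      · rw [if_pos ha] at hx; exact hx.1
      · rw [if_neg ha] at hx
        by_cases ha' : a ∈ E.Surv Gd
        · rw [if_pos ha'] at hx; exact hx.1
        · rw [if_neg ha'] at hx; exact hx
    · intro x hR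
      by_cases ha : a ∈ Gd
      · by_cases hdef : E.Defeats (E.charFun^[E.stage a - 1] ∅) x a
        · left
          simp only [hF, if_pos ha]
          exact ⟨hR, hdef⟩
        · right
          refine ⟨CZ a x, ?_, (hCZ a x ⟨hR, hdef⟩).1⟩
          intro y hy
          simp only [hT, if_pos ha]
          exact Set.mem_biUnion (show x ∈ {x | E.R x a ∧
            ¬E.Defeats (E.charFun^[E.stage a - 1] ∅) x a} from ⟨hR, hdef⟩) hy
      · by_cases ha' : a ∈ E.Surv Gd
        · by_cases hxX : x ∈ Gd
          · right
            by_cases hdef : E.Defeats Gd x a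
            · refine ⟨CR a x, ?_, (hCR a x ⟨ha', hxX, hdef⟩).1⟩
              intro y hy
              simp only [hT, if_neg ha, if_pos ha']
              right
              exact Set.mem_biUnion (show x ∈ {x | E.R x a ∧ x ∈ Gd ∧ E.Defeats Gd x a}
                from ⟨hR, hxX, hdef⟩) hy
            · refine ⟨CX a x, ?_, (hCX a x ⟨hR, hdef⟩).1⟩
              intro y hy
              simp only [hT, if_neg ha, if_pos ha']
              left
              exact Set.mem_biUnion (show x ∈ {x | E.R x a ∧ x ∈ Gd ∧ ¬E.Defeats Gd x a}
                from ⟨hR, hxX, hdef⟩) hy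
          · left
            simp only [hF, if_neg ha, if_pos ha']
            exact ⟨hR, hxX⟩
        · left
          simp only [hF, if_neg ha, if_neg ha']
          exact hR
  obtain ⟨pd, hpd1, hpd2, hpd3, hpd4⟩ := exists_pd_of_choices E.toADF T F hdec
  refine ⟨pd, hpd1, hpd2, ?_, ?_, ?_, ?_⟩
  · -- pdT of grounded arguments lies in the previous stage
    intro a ha y hy
    have hy' := hpd3 a hy
    simp only [hT, if_pos ha] at hy'
    obtain ⟨x, hx, hyx⟩ := Set.mem_iUnion₂.1 hy'
    exact (hCZ a x ⟨hx.1, hx.2⟩).2 hyx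
  · -- fset avoids the grounded extension on survivors
    intro a ha
    ext y
    simp only [Set.mem_inter_iff, Set.mem_empty_iff_false, iff_false, not_and]
    intro hy hyX
    have hy' := hpd4 a hy
    by_cases haG : a ∈ Gd
    · simp only [hF, if_pos haG] at hy'
      have hyd : y ∈ E.discarded (E.charFun^[E.stage a - 1] ∅) :=
        E.grounded_defends haG y hy'.2
      have : y ∈ E.discarded Gd := E.disc_iter_subset haG hyd
      exact (Set.eq_empty_iff_forall_notMem.1 E.grounded_inter_discarded y) ⟨hyX, this⟩
    · simp only [hF, if_neg haG, if_pos ha] at hy'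
      exact hy'.2 hyX
  · -- pdT of survivors lands in survivors
    intro a ha y hy
    have hy' := hpd3 a hy
    by_cases haG : a ∈ Gd
    · simp only [hT, if_pos haG] at hy'
      obtain ⟨x, hx, hyx⟩ := Set.mem_iUnion₂.1 hy'
      exact hGdS (E.iter_subset_grounded _ ((hCZ a x ⟨hx.1, hx.2⟩).2 hyx))
    · simp only [hT, if_neg haG, if_pos ha] at hy'
      rcases hy' with hy' | hy'
      · obtain ⟨x, hx, hyx⟩ := Set.mem_iUnion₂.1 hy'
        exact hGdS ((hCX a x ⟨hx.1, hx.2.2⟩).2 hyx)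
      · obtain ⟨x, hx, hyx⟩ := Set.mem_iUnion₂.1 hy'
        exact ((hCR a x ⟨ha, hx.2.1, hx.2.2⟩).2 y hyx).1
  · -- rank decrease outside the grounded extension
    intro a ha haG d hd
    have hy' := hpd3 a hd
    simp only [hT, if_neg haG, if_pos ha] at hy'
    rcases hy' with hy' | hy'
    · obtain ⟨x, hx, hyx⟩ := Set.mem_iUnion₂.1 hy'
      exact Or.inl ((hCX a x ⟨hx.1, hx.2.2⟩).2 hyx)
    · obtain ⟨x, hx, hyx⟩ := Set.mem_iUnion₂.1 hy'
      right
      have h1 := ((hCR a x ⟨ha, hx.2.1, hx.2.2⟩).2 d hyx).2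
      have h2 : E.rank Gd (x, a) + 1 ≤ E.rho Gd a :=
        E.rho_ge ⟨⟨hx.2.1, hx.2.2⟩, (E.surv_iff Gd a).1 ha x⟩
      omega

end EAFC

end Dialectical

namespace Dialectical

open Set

variable {α : Type u}

lemma pdT_congr {pd pd' : α → Option (Interp α)} {a : α} (h : pd a = pd' a) :
    pdT pd a = pdT pd' a := by
  unfold pdT
  rw [h]

lemma pdF_congr {pd pd' : α → Option (Interp α)} {a : α} (h : pd a = pd' a) :
    pdF pd a = pdF pd' a := by
  unfold pdF
  rw [h]

namespace EAFC

variable (E : EAFC α)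

lemma exists_minDecIn_toADF [Fintype α] (a : α) : ∃ v, E.toADF.MinDecIn v a := by
  obtain ⟨v, hv, -, -⟩ := exists_minDecIn_le E.toADF (decIn_allFalse E.toADF a (E.C_empty a))
  exact ⟨v, hv⟩

/-- Evaluations relative to a pd-function of `X` are also evaluations relative to a
pd-function of the full framework. -/
lemma paEval_univ_of [Fintype α] {X : Set α} {b : α} {Fs : Set α} {G : List α} {B : Set α}
    (h : E.toADF.PAEval X b Fs G B) : E.toADF.PAEval Set.univ b Fs G B := by
  classical
  obtain ⟨pd, hms, hev⟩ := h
  choose dflt hdflt using fun a => E.exists_minDecIn_toADF a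
  set pd' : α → Option (Interp α) :=
    fun a => if a ∈ X ∧ pd a ≠ none then pd a else some (dflt a) with hpd'
  have hcopy : ∀ a, a ∈ X → pd a ≠ none → pd' a = pd a := by
    intro a h1 h2
    simp only [hpd', if_pos (And.intro h1 h2)]
  obtain ⟨c1, c2, c3, c4, c5, c6, c7, c8, c9, c10, c11, c12, c13⟩ := hev
  have hcopyF : ∀ a ∈ Fs, pd' a = pd a := fun a ha => hcopy a (c4 ha) (c6 a ha)
  have hcopyG : ∀ a ∈ G, pd' a = pd a := fun a ha => hcopy a (c5 a ha) (c7 a ha)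
  refine ⟨pd', maxSound_univ E.toADF pd' ?_ ?_,
    c1, c2, trivial, Set.subset_univ _, fun a _ => trivial,
    fun a ha => by rw [hcopyF a ha]; exact c6 a ha,
    fun a ha => by rw [hcopyG a ha]; exact c7 a ha,
    c8, c9, ?_, ?_, ?_, ?_⟩
  · intro a v hv
    simp only [hpd'] at hv
    by_cases hc : a ∈ X ∧ pd a ≠ none
    · rw [if_pos hc] at hv
      exact ((hms.1 a hc.1).1 v hv).1
    · rw [if_neg hc] at hv
      obtain rfl := Option.some.inj hv
      exact hdflt a
  · intro a
    simp only [hpd']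
    by_cases hc : a ∈ X ∧ pd a ≠ none
    · rw [if_pos hc]; exact hc.2
    · rw [if_neg hc]; exact Option.some_ne_none _
  · intro i hi
    rw [pdT_congr (hcopyG _ (List.get_mem G _))]
    exact c10 i hi
  · intro a ha
    rw [pdT_congr (hcopyF a ha)]
    exact c11 a ha
  · intro a ha
    obtain ⟨b', hb', hab⟩ := c12 a ha
    refine ⟨b', hb', ?_⟩
    rw [pdT_congr (hcopyF b' hb')]
    exact hab
  · rw [c13]
    congr 1
    · exact Set.iUnion₂_congr (fun a ha => (pdF_congr (hcopyF a ha)).symm)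
    · exact Set.iUnion₂_congr (fun a ha => (pdF_congr (hcopyG a ha)).symm)

lemma aa_not_aDiscarded [Fintype α] {Y : Set α} (hY : E.toADF.PDAcyclicCF Y) {y : α}
    (hy : y ∈ Y) : y ∉ E.toADF.aDiscarded Y := by
  obtain ⟨G, B, hae, hBY⟩ := hY y hy
  intro had
  have := had G B (E.paEval_univ_of hae)
  rw [hBY] at this
  exact Set.not_nonempty_empty this

/-! ### The acyclic discarded set of the grounded extension -/

lemma gnd_surv_aeval [Fintype α] (hsc : E.StronglyConsistent) {b : α}
    (hb : b ∈ E.Surv E.grounded) :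
    ∃ G B, E.toADF.AcyclicEval Set.univ b G B ∧ B ∩ E.grounded = ∅ := by
  obtain ⟨N, hN, hgr⟩ := E.exists_fix
  obtain ⟨pd, hp1, hp2, hp3, hp4, hp5, hp6⟩ := E.exists_pd_gnd hsc
  set ν : α → ℕ := fun c => if c ∈ E.grounded then E.stage c else N + 1 + E.rho E.grounded c
    with hν
  have hGdS := E.X_subset_surv E.grounded_cf
  have hgrad : ∀ a ∈ E.Surv E.grounded, a ∉ (∅ : Set α) → ∀ d ∈ pdT pd a,
      d ∈ (∅ : Set α) ∨ ν d < ν a := by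
    intro a ha _ d hd
    right
    by_cases haG : a ∈ E.grounded
    · have hdZ := hp3 a haG hd
      have hdG : d ∈ E.grounded := E.iter_subset_grounded _ hdZ
      have h1 : E.stage d ≤ E.stage a - 1 := E.stage_le hdZ
      have h2 : 1 ≤ E.stage a := E.stage_pos haG
      simp only [hν, if_pos haG, if_pos hdG]
      omega
    · by_cases hdG : d ∈ E.grounded
      · have : E.stage d ≤ N := E.stage_le_N hgr hdG
        simp only [hν, if_pos hdG, if_neg haG]
        omega
      · have hlt : E.rho E.grounded d < E.rho E.grounded a := by
          rcases hp6 a ha haG d hd with h | h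
          · exact absurd h hdG
          · exact h
        simp only [hν, if_neg hdG, if_neg haG]
        omega
  obtain ⟨Fs, G, B, hev, hFsX, hB⟩ := build_paeval pd Set.univ (E.Surv E.grounded) ∅ ν
    (Set.subset_univ _) hp5 (fun a _ => hp2 a) (Set.empty_subset _)
    (fun a ha => absurd ha (Set.notMem_empty a)) hgrad b hb
  have hFse : Fs = ∅ := Set.subset_empty_iff.1 hFsX
  subst hFse
  refine ⟨G, B, ⟨pd, maxSound_univ E.toADF pd hp1 hp2, hev⟩, ?_⟩
  ext y
  simp only [Set.mem_inter_iff, Set.mem_empty_iff_false, iff_false, not_and]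
  intro hyB hyX
  obtain ⟨a, ha, hya⟩ := Set.mem_iUnion₂.1 (hB hyB)
  exact (Set.eq_empty_iff_forall_notMem.1 (hp4 a ha) y) ⟨hya, hyX⟩

end EAFC

end Dialectical

namespace Dialectical

open Set

variable {α : Type u}

namespace EAFC

variable (E : EAFC α)

lemma aD_eq_discarded [Fintype α] (hsc : E.StronglyConsistent) :
    E.toADF.aDiscarded E.grounded = E.discarded E.grounded := by
  ext b
  constructor
  · intro hb
    by_contra hd
    obtain ⟨G, B, hae, hBG⟩ := E.gnd_surv_aeval hsc hd
    have := hb G B hae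
    rw [hBG] at this
    exact Set.not_nonempty_empty this
  · exact fun hb => E.mem_aDiscarded_of_discarded hsc subset_rfl hb

lemma pdacyclic_gnd [Fintype α] (hsc : E.StronglyConsistent) :
    E.toADF.PDAcyclicCF E.grounded := by
  classical
  intro a ha
  obtain ⟨pd, hp1, hp2, hp3, hp4, hp5, hp6⟩ := E.exists_pd_gnd hsc
  set pd' : α → Option (Interp α) := fun c => if c ∈ E.grounded then pd c else none with hpd'
  have hcopy : ∀ c ∈ E.grounded, pd' c = pd c := by
    intro c hc
    simp only [hpd', if_pos hc]
  have hGdS := E.X_subset_surv E.grounded_cf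
  have hgrad : ∀ c ∈ E.grounded, c ∉ (∅ : Set α) → ∀ d ∈ pdT pd' c,
      d ∈ (∅ : Set α) ∨ E.stage d < E.stage c := by
    intro c hc _ d hd
    rw [pdT_congr (hcopy c hc)] at hd
    right
    have h1 : E.stage d ≤ E.stage c - 1 := E.stage_le (hp3 c hc hd)
    have h2 : 1 ≤ E.stage c := E.stage_pos hc
    omega
  obtain ⟨Fs, G, B, hev, hFsX, hB⟩ := build_paeval pd' E.grounded E.grounded ∅ E.stage
    subset_rfl
    (by
      intro c hc
      rw [pdT_congr (hcopy c hc)]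
      exact (hp3 c hc).trans (E.iter_subset_grounded _))
    (by
      intro c hc
      rw [hcopy c hc]
      exact hp2 c)
    (Set.empty_subset _)
    (fun c hc => absurd hc (Set.notMem_empty c))
    hgrad a ha
  have hFse : Fs = ∅ := Set.subset_empty_iff.1 hFsX
  subst hFse
  refine ⟨G, B, ⟨pd', maxSound_of_total E.toADF E.grounded pd' ?_ ?_, hev⟩, ?_⟩
  · intro c hc v hv
    rw [hcopy c hc] at hv
    refine ⟨hp1 c v hv, ?_⟩
    rw [← pdT_eq pd hv]
    exact (hp3 c hc).trans (E.iter_subset_grounded _)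
  · intro c hc
    rw [hcopy c hc]
    exact hp2 c
  · ext y
    simp only [Set.mem_inter_iff, Set.mem_empty_iff_false, iff_false, not_and]
    intro hyB hyX
    obtain ⟨c, hc, hyc⟩ := Set.mem_iUnion₂.1 (hB hyB)
    rw [pdF_congr (hcopy c hc)] at hyc
    exact (Set.eq_empty_iff_forall_notMem.1 (hp4 c (hGdS hc)) y) ⟨hyc, hyX⟩

lemma decIn_aRange_gnd_iff [Fintype α] (hsc : E.StronglyConsistent) (e : α) :
    E.toADF.DecisivelyIn (E.toADF.aRange E.grounded) e ↔ E.Defends E.grounded e := by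
  have heq : E.toADF.aRange E.grounded = E.toADF.pRange E.grounded := by
    unfold ADF.aRange ADF.pRange
    rw [E.aD_eq_discarded hsc, E.pD_eq_discarded hsc E.grounded_cf]
  rw [heq]
  exact E.decIn_pRange_iff hsc E.grounded_cf e

lemma aacomplete_grounded [Fintype α] (hsc : E.StronglyConsistent) :
    E.toADF.AAComplete E.grounded := by
  have hcomp := E.grounded_complete
  refine ⟨⟨E.pdacyclic_gnd hsc, fun e he => ?_⟩, fun e he => ?_⟩
  · exact (E.decIn_aRange_gnd_iff hsc e).2 (hcomp.1.2 e he)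
  · exact hcomp.2 e ((E.decIn_aRange_gnd_iff hsc e).1 he)

lemma grounded_subset_aacomplete [Fintype α] (hsc : E.StronglyConsistent) {Y : Set α}
    (hY : E.toADF.AAComplete Y) : E.grounded ⊆ Y := by
  suffices h : ∀ i, E.charFun^[i] ∅ ⊆ Y by exact Set.iUnion_subset h
  intro i
  induction i with
  | zero =>
    simp only [Function.iterate_zero, id_eq]
    exact Set.empty_subset _
  | succ i ih =>
    intro a ha
    rw [Function.iterate_succ_apply' E.charFun i ∅] at ha
    apply hY.2
    rw [ADF.aRange, decIn_mk_iff _ _ _ _ (Set.inter_diff_self _ _)]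
    intro S h1 h2 h3
    rw [C_true_iff]
    intro x hxS hR
    by_cases hdef : E.Defeats (E.charFun^[i] ∅) x a
    · exfalso
      have hxd : x ∈ E.discarded (E.charFun^[i] ∅) := ha x hdef
      have hxa : x ∈ E.toADF.aDiscarded Y := E.mem_aDiscarded_of_discarded hsc ih hxd
      have hxY : x ∈ Y := by
        by_contra hxY
        exact (Set.eq_empty_iff_forall_notMem.1 h3 x) ⟨hxS, ⟨hxa, hxY⟩⟩
      exact E.aa_not_aDiscarded hY.1.1 hxY hxa
    · obtain ⟨C, hCX, hCD⟩ := E.not_defeats_choice hR hdef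
      exact ⟨C, fun y hy => h1 ⟨ih (hCX hy), E.mem_par_def hCD hy⟩, hCD⟩

lemma grounded_iff [Fintype α] (hsc : E.StronglyConsistent) (X : Set α) :
    X = E.grounded ↔ E.toADF.IsAcyclicGrounded X := by
  constructor
  · rintro rfl
    exact ⟨E.aacomplete_grounded hsc, fun Y hY => E.grounded_subset_aacomplete hsc hY⟩
  · intro h
    apply Set.Subset.antisymm
    · exact h.2 E.grounded (E.aacomplete_grounded hsc)
    · exact E.grounded_subset_aacomplete hsc h.1

end EAFC

end Dialectical

open Dialectical in
/-- semantics correspondence between a strongly consistent EAFC and the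
ca₂-family of semantics of its corresponding ADF. -/
theorem eafc_toADF_semantics
    {α : Type} [Fintype α] (E : EAFC α) (h : E.StronglyConsistent) (X : Set α) :
    (E.ConflictFree X ↔ E.toADF.ConflictFree X) ∧
    (E.Stable X ↔ E.toADF.IsModel X) ∧
    (X = E.grounded ↔ E.toADF.IsAcyclicGrounded X) ∧
    (E.Admissible X ↔ E.toADF.CA2Admissible X) ∧
    (E.Complete X ↔ E.toADF.CA2Complete X) ∧
    (E.Preferred X ↔ E.toADF.CA2Preferred X) :=
  ⟨E.cf_iff X, E.stable_iff X, E.grounded_iff h X, E.admissible_iff h X,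
    E.complete_iff h X, E.preferred_iff h X⟩
end

section
/- Let (A, R, N) be a strongly consistent AFN and ADF^FN = (A, L, C) its corresponding ADF. Then ADF^FN is a BADF, i.e. every link of ADF^FN is supporting or attacking. -/
open Classical

universe u

open Dialectical in
/-- the ADF corresponding to a strongly consistent AFN is a BADF. -/
theorem afn_toADF_isBADF
    {α : Type} [Fintype α] (fn : AFN α) (h : fn.StronglyConsistent) :
    fn.toADF.IsBADF := by
  intro r s _
  by_cases hr : fn.R r s
  · right
    rintro ⟨R', -, hout, hin⟩
    simp only [AFN.toADF, decide_eq_true_iff, decide_eq_false_iff_not, not_not, not_or] at hout hin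
    rw [not_and_or, not_not, not_not] at hout
    obtain ⟨hin1, hin2⟩ := hin
    rcases hout with ⟨p, hp, hpR⟩ | ⟨Z, hZ, hZP⟩
    · exact hin1 ⟨p, Or.inl hp, hpR⟩
    · refine hin2 ⟨Z, hZ, ?_⟩
      ext x
      simp only [Set.mem_inter_iff, Set.mem_empty_iff_false, iff_false, not_and]
      intro hxZ hxP
      rcases hxP with hxR' | hxr
      · rw [Set.eq_empty_iff_forall_notMem] at hZP
        exact hZP x ⟨hxZ, hxR'⟩
      · have hx : x = r := hxr
        subst hx
        have := h s
        rw [Set.eq_empty_iff_forall_notMem] at this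
        exact this x ⟨⟨Z, hxZ, hZ⟩, hr⟩
  · left
    rintro ⟨R', -, hin, hout⟩
    simp only [AFN.toADF, decide_eq_true_iff, decide_eq_false_iff_not, not_not, not_or] at hout hin
    rw [not_and_or, not_not, not_not] at hout
    obtain ⟨hin1, hin2⟩ := hin
    rcases hout with ⟨p, hp, hpR⟩ | ⟨Z, hZ, hZP⟩
    · rcases hp with hpR' | hpr
      · exact hin1 ⟨p, hpR', hpR⟩
      · have hp : p = r := hpr
        subst hp
        exact hr hpR
    · refine hin2 ⟨Z, hZ, ?_⟩
      rw [Set.eq_empty_iff_forall_notMem] at hZP ⊢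
      intro x hx
      exact hZP x ⟨hx.1, Or.inl hx.2⟩
end

section
/- Let (A, R, N) be a strongly consistent AFN and ADF^FN its corresponding ADF. A set of arguments X ⊆ A is strongly coherent in (A, R, N) if and only if it is a pd-acyclic conflict-free extension of ADF^FN. -/
open Classical

universe u

open Dialectical

namespace AFNProof

variable {α : Type} [Fintype α]

/-! ### basic facts about mkInterp -/

lemma tset_mkInterp (T F : Set α) : tset (mkInterp T F) = T := by
  ext a
  simp only [tset, mkInterp, Set.mem_setOf_eq]
  by_cases h1 : a ∈ T
  · simp [h1]
  · by_cases h2 : a ∈ F <;> simp [h1, h2]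

lemma fset_mkInterp (T F : Set α) : fset (mkInterp T F) = F \ T := by
  ext a
  simp only [fset, mkInterp, Set.mem_setOf_eq, Set.mem_diff]
  by_cases h1 : a ∈ T
  · simp [h1]
  · by_cases h2 : a ∈ F <;> simp [h1, h2]

lemma idom_mkInterp (T F : Set α) : idom (mkInterp T F) = T ∪ F := by
  ext a
  simp only [idom, mkInterp, Set.mem_setOf_eq, Set.mem_union]
  by_cases h1 : a ∈ T
  · simp [h1]
  · by_cases h2 : a ∈ F <;> simp [h1, h2]

lemma tset_subset_idom (w : Interp α) : tset w ⊆ idom w := by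
  intro a ha; simp only [tset, Set.mem_setOf_eq] at ha
  simp [idom, ha]

lemma fset_subset_idom (w : Interp α) : fset w ⊆ idom w := by
  intro a ha; simp only [fset, Set.mem_setOf_eq] at ha
  simp [idom, ha]

/-! ### evalCond of toADF -/

lemma toADF_evalCond_iff (fn : AFN α) (a : α) (w : Interp α) :
    fn.toADF.evalCond a w = true ↔
      ¬ ((∃ p ∈ tset w ∩ fn.toADF.par a, fn.R p a) ∨
        ∃ Z, fn.N Z a ∧ Z ∩ (tset w ∩ fn.toADF.par a) = ∅) := by
  simp [ADF.evalCond, AFN.toADF]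

lemma mem_toADF_par_of_attack (fn : AFN α) {a b : α} (hb : fn.R b a) :
    b ∈ fn.toADF.par a := Or.inl hb

lemma mem_toADF_par_of_support (fn : AFN α) {a b : α} {Z : Set α}
    (hZ : fn.N Z a) (hb : b ∈ Z) : b ∈ fn.toADF.par a := Or.inr ⟨Z, hb, hZ⟩

/-! ### consequences of decisive-in -/

lemma decIn_consequences (fn : AFN α) (a : α) (w : Interp α)
    (hw : fn.toADF.DecisivelyIn w a) :
    (∀ b, fn.R b a → b ∈ fset w) ∧ (∀ Z, fn.N Z a → (Z ∩ tset w).Nonempty) := by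
  -- the completion mapping all unknown parents to false
  have hcomp1 : Completion w (mkInterp (tset w) (idom w ∪ fn.toADF.par a))
      (idom w ∪ fn.toADF.par a) := by
    constructor
    · rw [idom_mkInterp]
      apply Set.union_eq_self_of_subset_left
      exact fun x hx => Or.inl (tset_subset_idom w hx)
    · intro c hc
      rcases Option.ne_none_iff_exists'.mp hc with ⟨b, hb⟩
      cases b with
      | true =>
          have : c ∈ tset w := hb
          simp [mkInterp, this, hb]
      | false =>
          have hct : c ∉ tset w := by
            simp only [tset, Set.mem_setOf_eq, hb]; simp
          have : c ∈ idom w ∪ fn.toADF.par a := Or.inl hc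
          simp [mkInterp, hct, this, hb]
  have h1 := hw _ hcomp1
  rw [toADF_evalCond_iff, tset_mkInterp] at h1
  push_neg at h1
  obtain ⟨hnoatt, hhit⟩ := h1
  constructor
  · intro b hb
    by_contra hbf
    by_cases hbt : b ∈ tset w
    · exact hnoatt b ⟨hbt, mem_toADF_par_of_attack fn hb⟩ hb
    · -- b is undefined in w; complete with b ↦ true
      have hbid : b ∉ idom w := by
        intro hid
        rcases Option.ne_none_iff_exists'.mp hid with ⟨c, hc⟩
        cases c with
        | true => exact hbt hc
        | false => exact hbf hc
      have hcomp2 : Completion w (mkInterp (tset w ∪ {b}) (idom w ∪ fn.toADF.par a))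
          (idom w ∪ fn.toADF.par a) := by
        constructor
        · rw [idom_mkInterp]
          have hb1 : tset w ∪ {b} ⊆ idom w ∪ fn.toADF.par a := by
            intro c hc
            rcases hc with hc | hc
            · exact Or.inl (tset_subset_idom w hc)
            · rcases hc with rfl
              exact Or.inr (mem_toADF_par_of_attack fn hb)
          exact Set.union_eq_self_of_subset_left hb1
        · intro c hc
          rcases Option.ne_none_iff_exists'.mp hc with ⟨d, hd⟩
          cases d with
          | true =>
              have hct : c ∈ tset w := hd
              simp [mkInterp, Set.mem_union, hct, hd]
          | false =>
              have hcb : c ≠ b := fun e => hbid (e ▸ hc)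
              have hct : c ∉ tset w := by simp [tset, hd]
              have hcm : c ∈ idom w ∪ fn.toADF.par a := Or.inl hc
              simp [mkInterp, Set.mem_union, hcb, hct, hcm, hd]
      have h2 := hw _ hcomp2
      rw [toADF_evalCond_iff, tset_mkInterp] at h2
      push_neg at h2
      exact h2.1 b ⟨Or.inr rfl, mem_toADF_par_of_attack fn hb⟩ hb
  · intro Z hZ
    obtain ⟨c, hc1, hc2, _⟩ := hhit Z hZ
    exact ⟨c, hc1, hc2⟩

/-! ### sufficiency for MinDecIn -/

lemma minDecIn_mk (fn : AFN α) (a : α) (T : Set α)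
    (hhit : ∀ Z, fn.N Z a → (Z ∩ T).Nonempty)
    (hmin : ∀ T' ⊆ T, (∀ Z, fn.N Z a → (Z ∩ T').Nonempty) → T' = T)
    (hdisj : ∀ t ∈ T, ¬ fn.R t a) :
    fn.toADF.MinDecIn (mkInterp T {b | fn.R b a}) a := by
  set v := mkInterp T {b | fn.R b a} with hv
  have htv : tset v = T := tset_mkInterp _ _
  have hfv : fset v = {b | fn.R b a} := by
    rw [hv, fset_mkInterp]
    ext b; simp only [Set.mem_diff, Set.mem_setOf_eq]
    constructor
    · exact fun h => h.1
    · intro hb; exact ⟨hb, fun ht => hdisj b ht hb⟩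
  constructor
  · -- decisively in
    intro w hw
    rw [toADF_evalCond_iff]
    rintro (⟨p, ⟨hpt, hppar⟩, hpR⟩ | ⟨Z, hZ, hZe⟩)
    · -- an attacker true in w: impossible, attackers are in fset v
      have hpf : p ∈ fset v := by rw [hfv]; exact hpR
      have hpid : p ∈ idom v := fset_subset_idom v hpf
      have := hw.2 p hpid
      simp only [fset, Set.mem_setOf_eq] at hpf
      simp only [tset, Set.mem_setOf_eq] at hpt
      rw [hpt] at this
      rw [hpf] at this
      exact (by simp at this : False)
    · obtain ⟨t, htZ, htT⟩ := hhit Z hZ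
      have htv' : t ∈ tset v := by rw [htv]; exact htT
      have htid : t ∈ idom v := tset_subset_idom v htv'
      have hwt : w t = v t := hw.2 t htid
      have : t ∈ tset w := by
        simp only [tset, Set.mem_setOf_eq] at htv' ⊢
        rw [hwt]; exact htv'
      have : t ∈ Z ∩ (tset w ∩ fn.toADF.par a) :=
        ⟨htZ, this, mem_toADF_par_of_support fn hZ htZ⟩
      rw [hZe] at this
      exact this
  · -- minimality
    intro w hw hts hfs
    obtain ⟨hatt, hhit'⟩ := decIn_consequences fn a w hw
    have hfeq : fset w = fset v := by
      apply Set.Subset.antisymm hfs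
      rw [hfv]; intro b hb; exact hatt b hb
    have hteq : tset w = tset v := by
      rw [htv] at hts ⊢
      exact hmin (tset w) hts (fun Z hZ => hhit' Z hZ)
    exact ⟨hteq, hfeq⟩

/-! ### minimal hitting sets -/

lemma exists_min_hitting (fn : AFN α) (a : α) (S : Set α)
    (hS : ∀ Z, fn.N Z a → (Z ∩ S).Nonempty) :
    ∃ T ⊆ S, (∀ Z, fn.N Z a → (Z ∩ T).Nonempty) ∧
      ∀ T' ⊆ T, (∀ Z, fn.N Z a → (Z ∩ T').Nonempty) → T' = T := by
  classical
  set P : Finset α → Prop :=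
    fun t => (↑t : Set α) ⊆ S ∧ ∀ Z, fn.N Z a → (Z ∩ (↑t : Set α)).Nonempty with hP
  set 𝒮 : Finset (Finset α) := Finset.univ.filter P with hS𝒮
  have hmem : ∀ t : Finset α, t ∈ 𝒮 ↔ P t := by
    intro t; simp [hS𝒮]
  have hne : 𝒮.Nonempty := by
    refine ⟨S.toFinite.toFinset, (hmem _).mpr ?_⟩
    constructor
    · rw [Set.Finite.coe_toFinset]
    · rw [Set.Finite.coe_toFinset]; exact hS
  obtain ⟨m, hm, hmin⟩ : ∃ m ∈ 𝒮, ∀ x ∈ 𝒮, ¬ x < m := by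
    obtain ⟨m, hm⟩ := Finset.exists_minimal hne
    exact ⟨m, hm.1, fun x hx hlt => hlt.not_ge (hm.2 hx hlt.le)⟩
  rw [hmem] at hm
  refine ⟨(↑m : Set α), hm.1, hm.2, ?_⟩
  intro T' hT' hhit'
  have hfin : T'.Finite := Set.Finite.subset m.finite_toSet hT'
  have hsub : hfin.toFinset ⊆ m := by
    intro x hx
    rw [Set.Finite.mem_toFinset] at hx
    exact_mod_cast hT' hx
  have hin : hfin.toFinset ∈ 𝒮 := by
    rw [hmem]
    constructor
    · rw [Set.Finite.coe_toFinset]; exact Set.Subset.trans hT' hm.1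
    · rw [Set.Finite.coe_toFinset]; exact hhit'
  have := hmin _ hin
  have heq : hfin.toFinset = m := by
    by_contra hne'
    exact this (lt_of_le_of_ne hsub hne')
  calc T' = ↑hfin.toFinset := by rw [Set.Finite.coe_toFinset]
    _ = ↑m := by rw [heq]

/-! ### elements of minimal hitting sets are supporters -/

lemma min_hitting_mem_support (fn : AFN α) (a : α) (T : Set α)
    (hhit : ∀ Z, fn.N Z a → (Z ∩ T).Nonempty)
    (hmin : ∀ T' ⊆ T, (∀ Z, fn.N Z a → (Z ∩ T').Nonempty) → T' = T) :
    ∀ t ∈ T, ∃ Z, fn.N Z a ∧ t ∈ Z := by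
  intro t ht
  by_contra hno
  push_neg at hno
  have : T \ {t} = T := by
    apply hmin _ Set.diff_subset
    intro Z hZ
    obtain ⟨s, hsZ, hsT⟩ := hhit Z hZ
    refine ⟨s, hsZ, hsT, ?_⟩
    intro hst
    rw [Set.mem_singleton_iff] at hst
    exact hno Z hZ (hst ▸ hsZ)
  have := this ▸ ht
  exact this.2 rfl

/-! ### stages -/

def Ys (fn : AFN α) (X : Set α) : ℕ → Set α
  | 0 => ∅
  | k+1 => {a | a ∈ X ∧ ∀ Z, fn.N Z a → (Z ∩ Ys fn X k).Nonempty}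

lemma Ys_subset_X (fn : AFN α) (X : Set α) : ∀ k, Ys fn X k ⊆ X
  | 0 => by simp [Ys]
  | _+1 => fun a ha => ha.1

lemma Ys_succ_mono (fn : AFN α) (X : Set α) : ∀ k, Ys fn X k ⊆ Ys fn X (k+1)
  | 0 => by simp [Ys]
  | k+1 => fun a ha => ⟨ha.1, fun Z hZ => by
      obtain ⟨c, hc1, hc2⟩ := ha.2 Z hZ
      exact ⟨c, hc1, Ys_succ_mono fn X k hc2⟩⟩

lemma Ys_mono (fn : AFN α) (X : Set α) {j k : ℕ} (h : j ≤ k) :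
    Ys fn X j ⊆ Ys fn X k := by
  induction h with
  | refl => exact Set.Subset.rfl
  | step _ ih => exact ih.trans (Ys_succ_mono fn X _)

lemma coherent_mem_Ys (fn : AFN α) (X : Set α) (hcoh : fn.Coherent X) {a : α}
    (ha : a ∈ X) : ∃ k, a ∈ Ys fn X k := by
  obtain ⟨_, G, hne, hmem, hlast, hpow⟩ := hcoh a ha
  have key : ∀ i (hi : i < G.length), G.get ⟨i, hi⟩ ∈ Ys fn X (i+1) := by
    intro i
    induction i using Nat.strong_induction_on with
    | _ i ih =>
      intro hi
      refine ⟨hmem _ (G.get_mem ⟨i, hi⟩), ?_⟩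
      intro Z hZ
      obtain ⟨j, hj, hji, hjZ⟩ := hpow i hi Z hZ
      exact ⟨G.get ⟨j, hj⟩, hjZ, Ys_mono fn X (by omega) (ih j hji hj)⟩
  have hlen : 0 < G.length := List.length_pos_iff.mpr hne
  have h1 := key (G.length - 1) (by omega)
  rw [List.getLast?_eq_getLast hne] at hlast
  have h2 : G.getLast hne = a := Option.some.inj hlast
  have h3 : G.get ⟨G.length - 1, by omega⟩ = G.getLast hne := by
    rw [List.getLast_eq_getElem]
    simp [List.get_eq_getElem]
  rw [h3, h2] at h1
  exact ⟨G.length - 1 + 1, h1⟩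

noncomputable def stg (fn : AFN α) (X : Set α) (a : α) : ℕ :=
  if h : ∃ k, a ∈ Ys fn X k then Nat.find h else 0

lemma stg_spec (fn : AFN α) (X : Set α) {a : α} (h : ∃ k, a ∈ Ys fn X k) :
    a ∈ Ys fn X (stg fn X a) ∧ ∀ j, j < stg fn X a → a ∉ Ys fn X j := by
  rw [stg, dif_pos h]
  exact ⟨Nat.find_spec h, fun j hj => Nat.find_min h hj⟩

lemma stg_pos (fn : AFN α) (X : Set α) {a : α} (h : ∃ k, a ∈ Ys fn X k) :
    0 < stg fn X a := by
  rcases Nat.eq_zero_or_pos (stg fn X a) with hz | hp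
  swap
  · exact hp
  · exfalso
    have := (stg_spec fn X h).1
    rw [hz] at this
    exact this

/-! ### enumeration of the stages -/

noncomputable def enumY (fn : AFN α) (X : Set α) : ℕ → List α
  | 0 => []
  | k+1 => enumY fn X k ++ (Ys fn X (k+1) \ Ys fn X k).toFinite.toFinset.toList

lemma enumY_nodup_mem (fn : AFN α) (X : Set α) :
    ∀ m, (enumY fn X m).Nodup ∧ ∀ b, b ∈ enumY fn X m ↔ b ∈ Ys fn X m := by
  intro m
  induction m with
  | zero => simp [enumY, Ys]
  | succ k ih =>
    obtain ⟨hnd, hmem⟩ := ih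
    constructor
    · rw [enumY, List.nodup_append]
      refine ⟨hnd, Finset.nodup_toList _, ?_⟩
      intro b hb1 b' hb2 rfl
      rw [hmem] at hb1
      rw [Finset.mem_toList, Set.Finite.mem_toFinset] at hb2
      exact hb2.2 hb1
    · intro b
      rw [enumY, List.mem_append, hmem, Finset.mem_toList, Set.Finite.mem_toFinset]
      constructor
      · rintro (hb | hb)
        · exact Ys_succ_mono fn X k hb
        · exact hb.1
      · intro hb
        by_cases hbk : b ∈ Ys fn X k
        · exact Or.inl hbk
        · exact Or.inr ⟨hb, hbk⟩

lemma enumY_order (fn : AFN α) (X : Set α) :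
    ∀ m, ∀ i (hi : i < (enumY fn X m).length),
      ∀ c ∈ Ys fn X (stg fn X ((enumY fn X m).get ⟨i, hi⟩) - 1),
        ∃ j, ∃ hj : j < (enumY fn X m).length, j < i ∧
          (enumY fn X m).get ⟨j, hj⟩ = c := by
  intro m
  induction m with
  | zero => intro i hi; simp [enumY] at hi
  | succ k ih =>
    intro i hi c hc
    have hGL : enumY fn X (k+1) =
        enumY fn X k ++ (Ys fn X (k+1) \ Ys fn X k).toFinite.toFinset.toList := rfl
    set L := enumY fn X k with hL
    set M := (Ys fn X (k+1) \ Ys fn X k).toFinite.toFinset.toList with hM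
    have hlen : (enumY fn X (k+1)).length = L.length + M.length := by
      rw [hGL]; simp
    rcases lt_or_ge i L.length with hiL | hiL
    · -- in the old part
      have hget : (enumY fn X (k+1)).get ⟨i, hi⟩ = L.get ⟨i, hiL⟩ := by
        simp only [List.get_eq_getElem, hGL]
        exact List.getElem_append_left hiL
      rw [hget] at hc
      obtain ⟨j, hj, hji, hjc⟩ := ih i hiL c hc
      refine ⟨j, by rw [hlen]; omega, hji, ?_⟩
      simp only [List.get_eq_getElem, hGL]
      rw [List.getElem_append_left hj]
      simpa [List.get_eq_getElem] using hjc
    · -- in the new part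
      set b := (enumY fn X (k+1)).get ⟨i, hi⟩ with hb
      have hiM : i - L.length < M.length := by rw [hlen] at hi; omega
      have hbM : b ∈ M := by
        have hbeq : b = M[i - L.length]'hiM := by
          simp only [hb, List.get_eq_getElem, hGL]
          exact List.getElem_append_right hiL
        rw [hbeq]
        exact List.getElem_mem hiM
      have hbYs : b ∈ Ys fn X (k+1) \ Ys fn X k := by
        rw [hM, Finset.mem_toList, Set.Finite.mem_toFinset] at hbM
        exact hbM
      have hex : ∃ n, b ∈ Ys fn X n := ⟨k+1, hbYs.1⟩
      have hstg : stg fn X b = k + 1 := by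
        have hle : stg fn X b ≤ k + 1 := by
          rw [stg, dif_pos hex]
          exact Nat.find_le hbYs.1
        rcases Nat.lt_or_ge (stg fn X b) (k+1) with hlt | hge
        · exfalso
          have := (stg_spec fn X hex).1
          exact hbYs.2 (Ys_mono fn X (by omega) this)
        · omega
      rw [hstg] at hc
      simp only [Nat.add_sub_cancel] at hc
      have hcL : c ∈ L := by
        rw [hL, (enumY_nodup_mem fn X k).2]
        exact hc
      obtain ⟨⟨j, hj⟩, hjc⟩ := List.mem_iff_get.mp hcL
      refine ⟨j, by rw [hlen]; omega, by omega, ?_⟩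
      simp only [List.get_eq_getElem, hGL]
      rw [List.getElem_append_left hj]
      simpa [List.get_eq_getElem] using hjc

end AFNProof

open Dialectical in
/-- `X` is strongly coherent in a strongly consistent AFN iff it is a
pd-acyclic conflict-free extension of the corresponding ADF. -/
theorem afn_toADF_stronglyCoherent_iff_pdAcyclicCF
    {α : Type} [Fintype α] (fn : AFN α) (h : fn.StronglyConsistent) (X : Set α) :
    fn.StronglyCoherent X ↔ fn.toADF.PDAcyclicCF X := by
  constructor
  · rintro ⟨hcf, hcoh⟩
    -- choose minimal hitting sets inside the stages
    have hTall : ∀ a : α, ∃ T : Set α, a ∈ X →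
        (T ⊆ AFNProof.Ys fn X (AFNProof.stg fn X a - 1) ∧
          (∀ Z, fn.N Z a → (Z ∩ T).Nonempty) ∧
          ∀ T' ⊆ T, (∀ Z, fn.N Z a → (Z ∩ T').Nonempty) → T' = T) := by
      intro a
      by_cases ha : a ∈ X
      · have hex := AFNProof.coherent_mem_Ys fn X hcoh ha
        have hpos := AFNProof.stg_pos fn X hex
        have hmem : a ∈ AFNProof.Ys fn X ((AFNProof.stg fn X a - 1) + 1) := by
          rw [Nat.sub_add_cancel hpos]
          exact (AFNProof.stg_spec fn X hex).1
        obtain ⟨T, hT1, hT2, hT3⟩ := AFNProof.exists_min_hitting fn a _ hmem.2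
        exact ⟨T, fun _ => ⟨hT1, hT2, hT3⟩⟩
      · exact ⟨∅, fun hx => absurd hx ha⟩
    choose T hT using hTall
    set pd : α → Option (Interp α) :=
      fun b => if b ∈ X then some (mkInterp (T b) {c | fn.R c b}) else none with hpddef
    have hpdsome : ∀ a ∈ X, pd a = some (mkInterp (T a) {c | fn.R c a}) := by
      intro a ha; simp [hpddef, ha]
    have hTnoatt : ∀ a ∈ X, ∀ t ∈ T a, ¬ fn.R t a := by
      intro a ha t ht hR
      obtain ⟨Z, hZ, htZ⟩ := AFNProof.min_hitting_mem_support fn a (T a)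
        (hT a ha).2.1 (hT a ha).2.2 t ht
      exact Set.eq_empty_iff_forall_notMem.mp (h a) t ⟨⟨Z, htZ, hZ⟩, hR⟩
    have hpdT : ∀ a ∈ X, pdT pd a = T a := by
      intro a ha
      ext b
      simp only [pdT, Set.mem_setOf_eq, hpdsome a ha]
      constructor
      · rintro ⟨v, hv, hb⟩
        rw [← Option.some.inj hv, AFNProof.tset_mkInterp] at hb
        exact hb
      · intro hb
        exact ⟨_, rfl, by rw [AFNProof.tset_mkInterp]; exact hb⟩
    have hpdF : ∀ a ∈ X, pdF pd a = {c | fn.R c a} := by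
      intro a ha
      ext b
      simp only [pdF, Set.mem_setOf_eq, hpdsome a ha]
      constructor
      · rintro ⟨v, hv, hb⟩
        rw [← Option.some.inj hv, AFNProof.fset_mkInterp] at hb
        exact hb.1
      · intro hb
        refine ⟨_, rfl, ?_⟩
        rw [AFNProof.fset_mkInterp]
        exact ⟨hb, fun htb => hTnoatt a ha b htb hb⟩
    have hPD : fn.toADF.PDFun X pd := by
      intro a ha
      constructor
      · intro v hv
        rw [hpdsome a ha] at hv
        rw [← Option.some.inj hv]
        refine ⟨AFNProof.minDecIn_mk fn a (T a) (hT a ha).2.1 (hT a ha).2.2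
          (hTnoatt a ha), ?_⟩
        rw [AFNProof.tset_mkInterp]
        exact ((hT a ha).1).trans (AFNProof.Ys_subset_X fn X _)
      · intro hnone
        rw [hpdsome a ha] at hnone
        exact absurd hnone (by simp)
    have hMS : fn.toADF.MaxSound X pd := by
      refine ⟨hPD, ?_⟩
      rintro ⟨X'', pd', _, _, hss, hsub, _⟩
      have hdom : soundDom X pd = X := by
        ext b
        simp only [soundDom, Set.mem_setOf_eq]
        exact ⟨fun hb => hb.1, fun hb => ⟨hb, by rw [hpdsome b hb]; simp⟩⟩
      rw [hdom] at hss
      exact hss.2 hsub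
    intro a ha
    have hex := AFNProof.coherent_mem_Ys fn X hcoh ha
    have hpos := AFNProof.stg_pos fn X hex
    set k := AFNProof.stg fn X a - 1 with hk
    set L := AFNProof.enumY fn X k with hLdef
    set G := L ++ [a] with hGdef
    set B := ((⋃ c ∈ (∅ : Set α), pdF pd c) ∪ ⋃ c ∈ {c | c ∈ G}, pdF pd c) with hBdef
    have hLYs := fun b => ((AFNProof.enumY_nodup_mem fn X k).2 b)
    have haL : a ∉ L := by
      intro haL
      rw [hLYs] at haL
      exact (AFNProof.stg_spec fn X hex).2 k (by omega) haL
    have hGlen : G.length = L.length + 1 := by rw [hGdef]; simp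
    have hmemGX : ∀ b ∈ G, b ∈ X := by
      intro b hb
      rw [hGdef, List.mem_append] at hb
      rcases hb with hb | hb
      · exact AFNProof.Ys_subset_X fn X k ((hLYs b).mp hb)
      · rw [List.mem_singleton] at hb; exact hb ▸ ha
    have hGnodup : G.Nodup := by
      rw [hGdef, List.nodup_append]
      refine ⟨(AFNProof.enumY_nodup_mem fn X k).1, List.nodup_singleton a, ?_⟩
      intro x hx x' hxa rfl
      rw [List.mem_singleton] at hxa
      exact haL (hxa ▸ hx)
    have hGne : G ≠ [] := by rw [hGdef]; simp
    refine ⟨G, B, ⟨pd, hMS, by simp, hGnodup, ha, by simp, hmemGX, by simp, ?_,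
      fun hGe => absurd hGe hGne, fun _ => ?_, ?_, by simp, by simp, rfl⟩, ?_⟩
    · intro b hb
      rw [hpdsome b (hmemGX b hb)]
      simp
    · rw [hGdef]
      exact List.getLast?_concat
    · -- the acyclicity ordering condition
      intro i hi
      rcases lt_or_ge i L.length with hiL | hiL
      · have hget : G.get ⟨i, hi⟩ = L.get ⟨i, hiL⟩ := by
          simp only [List.get_eq_getElem, hGdef]
          exact List.getElem_append_left hiL
        rw [hget]
        have hbX : (L.get ⟨i, hiL⟩) ∈ X :=
          AFNProof.Ys_subset_X fn X k ((hLYs _).mp (L.get_mem ⟨i, hiL⟩))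
        rw [hpdT _ hbX]
        intro c hc
        have hcY : c ∈ AFNProof.Ys fn X (AFNProof.stg fn X (L.get ⟨i, hiL⟩) - 1) :=
          (hT _ hbX).1 hc
        obtain ⟨j, hj, hji, hjc⟩ := AFNProof.enumY_order fn X k i hiL c hcY
        refine Set.mem_union_right _ ⟨j, by omega, hji, ?_⟩
        simp only [List.get_eq_getElem, hGdef]
        rw [List.getElem_append_left hj]
        simpa [List.get_eq_getElem] using hjc
      · have hieq : i = L.length := by omega
        have hget : G.get ⟨i, hi⟩ = a := by
          simp only [List.get_eq_getElem, hGdef]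
          exact List.getElem_concat_length hieq _
        rw [hget, hpdT a ha]
        intro c hc
        have hcY : c ∈ AFNProof.Ys fn X k := (hT a ha).1 hc
        have hcL : c ∈ L := (hLYs c).mpr hcY
        obtain ⟨⟨j, hj⟩, hjc⟩ := List.mem_iff_get.mp hcL
        refine Set.mem_union_right _ ⟨j, by omega, by omega, ?_⟩
        simp only [List.get_eq_getElem, hGdef]
        rw [List.getElem_append_left hj]
        simpa [List.get_eq_getElem] using hjc
    · -- B ∩ X = ∅
      apply Set.eq_empty_iff_forall_notMem.mpr
      rintro b ⟨hbB, hbX⟩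
      rw [hBdef] at hbB
      rcases hbB with hbB | hbB
      · simp at hbB
      · rw [Set.mem_iUnion₂] at hbB
        obtain ⟨c, hcG, hbc⟩ := hbB
        have hcX : c ∈ X := hmemGX c hcG
        rw [hpdF c hcX] at hbc
        exact hcf ⟨b, hbX, c, hcX, hbc⟩
  · intro hpd
    constructor
    · -- conflict-freeness
      rintro ⟨b, hb, c, hc, hbc⟩
      obtain ⟨G, B, ⟨pd, hMS, hpa⟩, hBX⟩ := hpd c hc
      obtain ⟨h1, h2, h3, h4, h5, h6, h7, h8, h9, h10, h11, h12, h13⟩ := hpa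
      have hGne : G ≠ [] := fun hGe => absurd (h8 hGe) (by simp)
      have hcG : c ∈ G := by
        have h9' := h9 hGne
        rw [List.getLast?_eq_getLast hGne] at h9'
        rw [← Option.some.inj h9']
        exact List.getLast_mem hGne
      obtain ⟨v, hv⟩ := Option.ne_none_iff_exists'.mp (h7 c hcG)
      have hmdi := ((hMS.1 c hc).1 v hv).1
      have hbf : b ∈ fset v := (AFNProof.decIn_consequences fn c v hmdi.1).1 b hbc
      have hbB : b ∈ B := by
        rw [h13]
        exact Set.mem_union_right _ (Set.mem_biUnion hcG ⟨v, hv, hbf⟩)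
      have hmem : b ∈ B ∩ X := ⟨hbB, hb⟩
      rw [hBX] at hmem
      exact hmem
    · -- coherence
      intro a ha
      obtain ⟨G, B, ⟨pd, hMS, hpa⟩, hBX⟩ := hpd a ha
      obtain ⟨h1, h2, h3, h4, h5, h6, h7, h8, h9, h10, h11, h12, h13⟩ := hpa
      have hGne : G ≠ [] := fun hGe => absurd (h8 hGe) (by simp)
      refine ⟨ha, G, hGne, h5, h9 hGne, ?_⟩
      intro i hi Z hZ
      have hbG : G.get ⟨i, hi⟩ ∈ G := G.get_mem ⟨i, hi⟩
      have hbX : G.get ⟨i, hi⟩ ∈ X := h5 _ hbG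
      obtain ⟨v, hv⟩ := Option.ne_none_iff_exists'.mp (h7 _ hbG)
      have hmdi := ((hMS.1 _ hbX).1 v hv).1
      obtain ⟨c, hcZ, hct⟩ :=
        (AFNProof.decIn_consequences fn _ v hmdi.1).2 Z hZ
      have hcpdT : c ∈ pdT pd (G.get ⟨i, hi⟩) := ⟨v, hv, hct⟩
      have hmem := h10 i hi hcpdT
      rcases hmem with hmem | hmem
      · simp at hmem
      · obtain ⟨j, hj, hji, hjc⟩ := hmem
        exact ⟨j, hj, hji, by rw [hjc]; exact hcZ⟩
end
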